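/- arXiv:1908.07186 — 2 statements merged into one kernel-verified Lean document; each statement's English description precedes it below -/
import Mathlib

section
/- Fix α ∈ (0,1), λ > 0, an integer m ≥ 1 and an integer k with 1 ≤ k ≤ m. Let f_α : (0,∞) → [0,∞) be a measurable function with ∫₀^∞ f_α(t) dt = 1 and ∫₀^∞ e^{-μ t} f_α(t) dt = e^{-μ^α} for all μ ≥ 0. Let S be a random variable with density t ↦ λ^{m-k-α} e^{λ^α} t^{m-k} e^{-λ t} f_α(t)/(α Ω_{m-k}(λ^α)) on (0,∞), and let G be an independent Gamma(k) random variable. Then the random variable G/(λ S) has Lebesgue density y ↦ (Ω_m(λ^α (1+y)^α)/(Γ(k) Ω_{m-k}(λ^α))) y^{k-1} (1+y)^{α-m} e^{-(λ^α(1+y)^α - λ^α)} on (0,∞). -/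
open MeasureTheory Set

/-- The rising factorial `(x)_m = x (x+1) ⋯ (x+m-1)`. -/
noncomputable def risingFactorial (x : ℝ) (m : ℕ) : ℝ := ∏ i ∈ Finset.range m, (x + i)

/-- The generalized Stirling number
`S_α(m,k) = (1/(α^k k!)) Σ_{j=1}^k (-1)^j C(k,j) (-jα)_m`. -/
noncomputable def genStirling (α : ℝ) (m k : ℕ) : ℝ :=
  (1 / (α ^ k * (Nat.factorial k : ℝ))) *
    ∑ j ∈ Finset.Icc 1 k, (-1 : ℝ) ^ j * (Nat.choose k j : ℝ) * risingFactorial (-(j : ℝ) * α) m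

/-- `P_α^{(m)}(k) = α^{k-1} Γ(k) S_α(m,k) / Γ(m)`. -/
noncomputable def Pstat (α : ℝ) (m k : ℕ) : ℝ :=
  α ^ ((k : ℝ) - 1) * Real.Gamma (k : ℝ) * genStirling α m k / Real.Gamma (m : ℝ)

/-- `Ω_m(x) = Γ(m) Σ_{ℓ=1}^m P_α^{(m)}(ℓ) x^{ℓ-1}/Γ(ℓ)` for `m ≥ 1`, and `Ω_0(x) = x⁻¹/α`. -/
noncomputable def Omega (α : ℝ) (m : ℕ) (x : ℝ) : ℝ :=
  if m = 0 then x⁻¹ / α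
  else Real.Gamma (m : ℝ) * ∑ ℓ ∈ Finset.Icc 1 m, Pstat α m ℓ * x ^ (ℓ - 1) / Real.Gamma (ℓ : ℝ)

/-- The Gamma(a) distribution (rate 1), with density `t^{a-1} e^{-t}/Γ(a)` on `(0,∞)`. -/
noncomputable def gammaM (a : ℝ) : Measure ℝ :=
  volume.withDensity ((Set.Ioi (0 : ℝ)).indicator fun t =>
    ENNReal.ofReal (t ^ (a - 1) * Real.exp (-t) / Real.Gamma a))






lemma risingFactorial_succ (x : ℝ) (m : ℕ) :
    risingFactorial x (m + 1) = risingFactorial x m * (x + m) :=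
  Finset.prod_range_succ _ _

lemma genStirling_zero_right (α : ℝ) (m : ℕ) : genStirling α m 0 = 0 := by
  simp [genStirling]

lemma Icc_sum_eq (g : ℕ → ℝ) (n : ℕ) :
    ∑ j ∈ Finset.Icc 1 n, g j = ∑ i ∈ Finset.range n, g (i + 1) := by
  rw [← Finset.Ico_add_one_right_eq_Icc, Finset.sum_Ico_eq_sum_range]
  exact Finset.sum_congr (by rw [Nat.add_sub_cancel]) fun i _ => by rw [add_comm]

lemma choose_mul_sub (k j : ℕ) : (k - j) * Nat.choose k j = k * Nat.choose (k - 1) j := by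
  cases k with
  | zero => simp
  | succ k' => rw [Nat.succ_sub_one, Nat.add_one_mul_choose_eq, Nat.choose_succ_right_eq, mul_comm]

lemma genStirling_rec {α : ℝ} (hα : α ≠ 0) (m k' : ℕ) :
    genStirling α (m + 1) (k' + 1)
      = ((m : ℝ) - ((k' : ℝ) + 1) * α) * genStirling α m (k' + 1) + genStirling α m k' := by
  have h2 : ∑ j ∈ Finset.Icc 1 (k'+1), (-1:ℝ)^j * ((((k'+1 : ℕ):ℝ) - (j:ℝ)) * (Nat.choose (k'+1) j : ℝ)) * risingFactorial (-(j:ℝ)*α) m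
      = ((k'+1 : ℕ):ℝ) * ∑ j ∈ Finset.Icc 1 k', (-1:ℝ)^j * (Nat.choose k' j : ℝ) * risingFactorial (-(j:ℝ)*α) m := by
    rw [Finset.sum_Icc_succ_top (show (1:ℕ) ≤ k' + 1 by omega), Finset.mul_sum]
    rw [sub_self, zero_mul, mul_zero, zero_mul, add_zero]
    refine Finset.sum_congr rfl fun j hj => ?_
    have hj' : j ≤ k' + 1 := le_trans (Finset.mem_Icc.mp hj).2 (Nat.le_succ _)
    have hc : (((k'+1 : ℕ)):ℝ) - (j:ℝ) = (((k'+1-j : ℕ)):ℝ) := by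
      rw [Nat.cast_sub hj']
    have hnat : ((k'+1-j) * Nat.choose (k'+1) j : ℕ) = ((k'+1) * Nat.choose k' j : ℕ) := by
      simpa using choose_mul_sub (k'+1) j
    have hcast : (((k'+1-j : ℕ)):ℝ) * (Nat.choose (k'+1) j : ℝ) = (((k'+1 : ℕ)):ℝ) * (Nat.choose k' j : ℝ) := by
      exact_mod_cast congrArg (fun n : ℕ => (n:ℝ)) hnat
    rw [hc, mul_assoc, hcast]
    ring
  have hsum : ∑ j ∈ Finset.Icc 1 (k'+1), (-1:ℝ)^j * (Nat.choose (k'+1) j : ℝ) * risingFactorial (-(j:ℝ)*α) (m+1)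
      = ((m:ℝ) - (((k'+1 : ℕ)):ℝ)*α) * (∑ j ∈ Finset.Icc 1 (k'+1), (-1:ℝ)^j * (Nat.choose (k'+1) j : ℝ) * risingFactorial (-(j:ℝ)*α) m)
        + α * ((((k'+1 : ℕ)):ℝ) * ∑ j ∈ Finset.Icc 1 k', (-1:ℝ)^j * (Nat.choose k' j : ℝ) * risingFactorial (-(j:ℝ)*α) m) := by
    rw [← h2, Finset.mul_sum, Finset.mul_sum, ← Finset.sum_add_distrib]
    refine Finset.sum_congr rfl fun j _ => ?_
    rw [risingFactorial_succ]
    push_cast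
    ring
  unfold genStirling
  rw [hsum]
  have hfac : (Nat.factorial (k'+1) : ℝ) = (((k'+1:ℕ)):ℝ) * (Nat.factorial k' : ℝ) := by
    rw [Nat.factorial_succ]; push_cast; ring
  have hfk : (Nat.factorial k' : ℝ) ≠ 0 := Nat.cast_ne_zero.mpr (Nat.factorial_ne_zero k')
  have hk1 : (((k'+1:ℕ)):ℝ) ≠ 0 := by positivity
  rw [hfac]
  field_simp
  push_cast
  ring

lemma genStirling_eq_zero {α : ℝ} (hα : α ≠ 0) {m ℓ : ℕ} (hm : 1 ≤ m) (h : m < ℓ) :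
    genStirling α m ℓ = 0 := by
  induction m, hm using Nat.le_induction generalizing ℓ with
  | base =>
    have hsum : ∑ j ∈ Finset.Icc 1 ℓ, (-1:ℝ)^j * (Nat.choose ℓ j : ℝ) * risingFactorial (-(j:ℝ)*α) 1 = 0 := by
      have h1 : ∀ j ∈ Finset.Icc 1 ℓ, (-1:ℝ)^j * (Nat.choose ℓ j : ℝ) * risingFactorial (-(j:ℝ)*α) 1
          = -α * ((-1:ℝ)^j * ((Nat.choose ℓ j : ℝ) * (j:ℝ))) := by
        intro j hj
        have : risingFactorial (-(j:ℝ)*α) 1 = -(j:ℝ)*α := by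
          simp [risingFactorial]
        rw [this]; ring
      rw [Finset.sum_congr rfl h1, ← Finset.mul_sum]
      have h2 : ∀ j ∈ Finset.Icc 1 ℓ, (-1:ℝ)^j * ((Nat.choose ℓ j : ℝ) * (j:ℝ))
          = (ℓ:ℝ) * ((-1:ℝ)^j * (Nat.choose (ℓ-1) (j-1) : ℝ)) := by
        intro j hj
        obtain ⟨hj1, hjℓ⟩ := Finset.mem_Icc.mp hj
        obtain ⟨ℓ', rfl⟩ : ∃ ℓ', ℓ = ℓ' + 1 := ⟨ℓ-1, by omega⟩
        obtain ⟨j', rfl⟩ : ∃ j', j = j' + 1 := ⟨j-1, by omega⟩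
        have hnat := Nat.add_one_mul_choose_eq ℓ' j'
        have hcast : ((ℓ':ℝ) + 1) * (Nat.choose ℓ' j' : ℝ) = (Nat.choose (ℓ'+1) (j'+1) : ℝ) * ((j':ℝ) + 1) := by
          exact_mod_cast congrArg (fun n : ℕ => (n:ℝ)) hnat
        simp only [Nat.add_sub_cancel]
        push_cast
        linear_combination ((-1:ℝ)^(j'+1)) * hcast.symm
      rw [Finset.sum_congr rfl h2, ← Finset.mul_sum]
      have h3 : ∑ j ∈ Finset.Icc 1 ℓ, (-1:ℝ)^j * (Nat.choose (ℓ-1) (j-1) : ℝ) = 0 := by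
        rw [Icc_sum_eq]
        have hstep : ∀ i ∈ Finset.range ℓ, (-1:ℝ)^(i+1) * (Nat.choose (ℓ-1) (i+1-1) : ℝ)
            = -((-1:ℝ)^i * (Nat.choose (ℓ-1) i : ℝ)) := by
          intro i _
          have : i + 1 - 1 = i := by omega
          rw [this, pow_add]
          ring
        rw [Finset.sum_congr rfl hstep, Finset.sum_neg_distrib, neg_eq_zero]
        obtain ⟨n, rfl⟩ : ∃ n, ℓ = n + 1 := ⟨ℓ-1, by omega⟩
        have hint := Int.alternating_sum_range_choose (n := n)
        rw [if_neg (by omega : ¬ n = 0)] at hint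
        have hreal : ∑ i ∈ Finset.range (n+1), (-1:ℝ)^i * (Nat.choose n i : ℝ) = 0 := by
          exact_mod_cast congrArg (fun z : ℤ => (z:ℝ)) hint
        simpa using hreal
      rw [h3]
      ring
    unfold genStirling
    rw [hsum, mul_zero]
  | succ m hm ih =>
    obtain ⟨ℓ', rfl⟩ : ∃ ℓ', ℓ = ℓ' + 1 := ⟨ℓ-1, by omega⟩
    rw [genStirling_rec hα]
    rw [ih (by omega), ih (by omega)]
    ring





lemma Omega_expand {α : ℝ} (hα : 0 < α) {j : ℕ} (hj : 1 ≤ j) {s : ℝ} (hs : 0 < s) :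
    Omega α j (s ^ α) * s ^ (α - (j:ℝ)) =
      ∑ i ∈ Finset.range j, α ^ i * genStirling α j (i+1) * s ^ (α * ((i:ℝ)+1) - (j:ℝ)) := by
  rw [Omega, if_neg (by omega)]
  rw [Icc_sum_eq (fun ℓ => Pstat α j ℓ * (s^α) ^ (ℓ-1) / Real.Gamma (ℓ:ℝ)) j]
  rw [Finset.mul_sum, Finset.sum_mul]
  refine Finset.sum_congr rfl fun i _ => ?_
  rw [Pstat]
  have hΓj : Real.Gamma (j:ℝ) ≠ 0 := (Real.Gamma_pos_of_pos (by exact_mod_cast hj)).ne'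
  have hΓi : Real.Gamma ((i+1:ℕ):ℝ) ≠ 0 :=
    (Real.Gamma_pos_of_pos (by positivity)).ne'
  have e1 : (α:ℝ) ^ (((i+1:ℕ):ℝ) - 1) = α ^ i := by
    rw [show ((i+1:ℕ):ℝ) - 1 = ((i:ℕ):ℝ) by push_cast; ring, Real.rpow_natCast]
  have e2 : ((s^α) ^ (i+1-1 : ℕ) : ℝ) = s ^ (α * (i:ℝ)) := by
    rw [show (i+1-1 : ℕ) = i from rfl, ← Real.rpow_natCast (s^α) i, ← Real.rpow_mul hs.le]
  have e3 : s ^ (α * (i:ℝ)) * s ^ (α - (j:ℝ)) = s ^ (α * ((i:ℝ)+1) - (j:ℝ)) := by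
    rw [← Real.rpow_add hs]; congr 1; ring
  rw [e1, e2]
  field_simp
  rw [← e3]
  ring

lemma sum_deriv_identity {α : ℝ} (hα : 0 < α) {j : ℕ} (hj : 1 ≤ j) {s : ℝ} (hs : 0 < s) :
    (∑ i ∈ Finset.range j, α ^ i * genStirling α j (i+1) * ((α * ((i:ℝ)+1) - (j:ℝ)) * s ^ (α * ((i:ℝ)+1) - (j:ℝ) - 1)))
      - α * s ^ (α - 1) * ∑ i ∈ Finset.range j, α ^ i * genStirling α j (i+1) * s ^ (α * ((i:ℝ)+1) - (j:ℝ))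
    = - ∑ i ∈ Finset.range (j+1), α ^ i * genStirling α (j+1) (i+1) * s ^ (α * ((i:ℝ)+1) - ((j:ℝ)+1)) := by
  have hrec : ∀ i : ℕ, genStirling α (j+1) (i+1) = ((j:ℝ) - ((i:ℝ)+1)*α) * genStirling α j (i+1) + genStirling α j i :=
    fun i => genStirling_rec hα.ne' j i
  have hsplit : ∑ i ∈ Finset.range (j+1), α ^ i * genStirling α (j+1) (i+1) * s ^ (α * ((i:ℝ)+1) - ((j:ℝ)+1))
      = (∑ i ∈ Finset.range (j+1), ((j:ℝ) - ((i:ℝ)+1)*α) * (α ^ i * genStirling α j (i+1) * s ^ (α * ((i:ℝ)+1) - ((j:ℝ)+1))))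
        + ∑ i ∈ Finset.range (j+1), α ^ i * genStirling α j i * s ^ (α * ((i:ℝ)+1) - ((j:ℝ)+1)) := by
    rw [← Finset.sum_add_distrib]
    exact Finset.sum_congr rfl fun i _ => by rw [hrec i]; ring
  have hA : (∑ i ∈ Finset.range (j+1), ((j:ℝ) - ((i:ℝ)+1)*α) * (α ^ i * genStirling α j (i+1) * s ^ (α * ((i:ℝ)+1) - ((j:ℝ)+1))))
      = ∑ i ∈ Finset.range j, ((j:ℝ) - ((i:ℝ)+1)*α) * (α ^ i * genStirling α j (i+1) * s ^ (α * ((i:ℝ)+1) - ((j:ℝ)+1))) := by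
    rw [Finset.sum_range_succ, genStirling_eq_zero hα.ne' hj (by omega)]
    simp
  have hB : (∑ i ∈ Finset.range (j+1), α ^ i * genStirling α j i * s ^ (α * ((i:ℝ)+1) - ((j:ℝ)+1)))
      = ∑ i ∈ Finset.range j, α ^ (i+1) * genStirling α j (i+1) * s ^ (α * (((i:ℝ)+1)+1) - ((j:ℝ)+1)) := by
    rw [Finset.sum_range_succ', genStirling_zero_right]
    simp only [mul_zero, zero_mul, add_zero]
    refine Finset.sum_congr rfl fun i _ => ?_
    norm_num
  have hRHS : -((∑ i ∈ Finset.range j, ((j:ℝ) - ((i:ℝ)+1)*α) * (α ^ i * genStirling α j (i+1) * s ^ (α * ((i:ℝ)+1) - ((j:ℝ)+1))))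
        + ∑ i ∈ Finset.range j, α ^ (i+1) * genStirling α j (i+1) * s ^ (α * (((i:ℝ)+1)+1) - ((j:ℝ)+1)))
      = ∑ i ∈ Finset.range j, -(((j:ℝ) - ((i:ℝ)+1)*α) * (α ^ i * genStirling α j (i+1) * s ^ (α * ((i:ℝ)+1) - ((j:ℝ)+1)))
          + α ^ (i+1) * genStirling α j (i+1) * s ^ (α * (((i:ℝ)+1)+1) - ((j:ℝ)+1))) := by
    rw [← Finset.sum_add_distrib, ← Finset.sum_neg_distrib]
  rw [hsplit, hA, hB, hRHS, Finset.mul_sum, ← Finset.sum_sub_distrib]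
  refine Finset.sum_congr rfl fun i _ => ?_
  have hx : s ^ (α - 1) * s ^ (α * ((i:ℝ)+1) - (j:ℝ)) = s ^ (α * (((i:ℝ)+1)+1) - ((j:ℝ)+1)) := by
    rw [← Real.rpow_add hs]; congr 1; ring
  have hx2 : s ^ (α * ((i:ℝ)+1) - (j:ℝ) - 1) = s ^ (α * ((i:ℝ)+1) - ((j:ℝ)+1)) := by
    congr 1; ring
  rw [hx2, ← hx]
  ring

section analytic
open Filter

lemma hΩ_one {α : ℝ} (hα : α ≠ 0) (x : ℝ) : Omega α 1 x = 1 := by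
  rw [Omega, if_neg one_ne_zero]
  simp only [Finset.Icc_self, Finset.sum_singleton, Pstat, genStirling, risingFactorial,
    Nat.cast_one, Real.Gamma_one, pow_one]
  norm_num
  field_simp

lemma closedForm_hasDeriv {α : ℝ} (hα0 : 0 < α) (j : ℕ) {s : ℝ} (hs : 0 < s) :
    HasDerivAt (fun u => α * Omega α j (u ^ α) * u ^ (α - (j:ℝ)) * Real.exp (-(u ^ α)))
      (-(α * Omega α (j+1) (s ^ α) * s ^ (α - ((j:ℝ)+1)) * Real.exp (-(s ^ α)))) s := by
  have hE : HasDerivAt (fun u : ℝ => Real.exp (-(u ^ α)))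
      (Real.exp (-(s ^ α)) * -(α * s ^ (α - 1))) s :=
    ((Real.hasDerivAt_rpow_const (Or.inl hs.ne')).neg).exp
  rcases Nat.eq_zero_or_pos j with hj | hj
  · subst hj
    have heq : (fun u => α * Omega α 0 (u^α) * u^(α - ((0:ℕ):ℝ)) * Real.exp (-(u^α)))
        =ᶠ[nhds s] (fun u : ℝ => Real.exp (-(u^α))) := by
      filter_upwards [Ioi_mem_nhds hs] with u hu
      rw [Omega, if_pos rfl]
      have hx : (0:ℝ) < u ^ α := Real.rpow_pos_of_pos hu α
      rw [show α * ((u^α)⁻¹/α) * u^(α - ((0:ℕ):ℝ)) = 1 by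
        rw [Nat.cast_zero, sub_zero]; field_simp]
      rw [one_mul]
    refine HasDerivAt.congr_of_eventuallyEq ?_ heq
    refine hE.congr_deriv ?_
    rw [hΩ_one hα0.ne']
    push_cast
    ring
  · have heq : (fun u => α * Omega α j (u^α) * u^(α - (j:ℝ)) * Real.exp (-(u^α)))
        =ᶠ[nhds s] (fun u => α * ((∑ i ∈ Finset.range j, α ^ i * genStirling α j (i+1) * u ^ (α * ((i:ℝ)+1) - (j:ℝ))) * Real.exp (-(u^α)))) := by
      filter_upwards [Ioi_mem_nhds hs] with u hu
      rw [← Omega_expand hα0 hj hu]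
      ring
    have hU : HasDerivAt (fun u : ℝ => ∑ i ∈ Finset.range j, α ^ i * genStirling α j (i+1) * u ^ (α * ((i:ℝ)+1) - (j:ℝ)))
        (∑ i ∈ Finset.range j, α ^ i * genStirling α j (i+1) * ((α * ((i:ℝ)+1) - (j:ℝ)) * s ^ (α * ((i:ℝ)+1) - (j:ℝ) - 1))) s := by
      refine HasDerivAt.fun_sum fun i _ => ?_
      exact (Real.hasDerivAt_rpow_const (Or.inl hs.ne')).const_mul _
    have hG := (hU.mul hE).const_mul α
    refine HasDerivAt.congr_of_eventuallyEq ?_ heq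
    refine hG.congr_deriv (Eq.symm ?_)
    have hkey := sum_deriv_identity hα0 hj hs
    have hΩ1 : Omega α (j+1) (s^α) * s ^ (α - ((j:ℝ)+1))
        = ∑ i ∈ Finset.range (j+1), α ^ i * genStirling α (j+1) (i+1) * s ^ (α * ((i:ℝ)+1) - ((j:ℝ)+1)) := by
      have h0 := Omega_expand hα0 (show 1 ≤ j+1 by omega) hs (j := j+1)
      push_cast at h0
      exact h0
    have expand : α * Omega α (j+1) (s ^ α) * s ^ (α - ((j:ℝ)+1)) * Real.exp (-(s ^ α))
        = α * ((Omega α (j+1) (s^α) * s ^ (α - ((j:ℝ)+1))) * Real.exp (-(s ^ α))) := by ring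
    rw [expand, hΩ1]
    linear_combination (-(α * Real.exp (-(s ^ α)))) * hkey
end analytic

section moments
open Filter

lemma integrableOn_exp_mul_f {α : ℝ} {f : ℝ → ℝ}
    (hflap : ∀ c : ℝ, 0 ≤ c →
      ∫ t in Ioi (0:ℝ), Real.exp (-c * t) * f t = Real.exp (-(c ^ α)))
    {c : ℝ} (hc : 0 ≤ c) :
    IntegrableOn (fun t => Real.exp (-c * t) * f t) (Ioi 0) := by
  by_contra h
  have h2 := hflap c hc
  rw [MeasureTheory.integral_undef h] at h2
  exact (Real.exp_pos _).ne' h2.symm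

lemma pow_le_exp_aux {c t : ℝ} (hc : 0 < c) (ht : 0 ≤ t) (j : ℕ) :
    t ^ j * Real.exp (-c * t) ≤ (Nat.factorial j : ℝ) * (2/c)^j * Real.exp (-(c/2) * t) := by
  have hN : (0:ℝ) < (Nat.factorial j : ℝ) := by exact_mod_cast (Nat.factorial_pos j)
  have h1 : ((c/2)*t)^j / (Nat.factorial j : ℝ) ≤ Real.exp ((c/2)*t) := by
    calc ((c/2)*t)^j / (Nat.factorial j : ℝ)
        ≤ ∑ i ∈ Finset.range (j+1), ((c/2)*t)^i / (Nat.factorial i : ℝ) := by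
          refine Finset.single_le_sum (f := fun i => ((c/2)*t)^i / (Nat.factorial i : ℝ))
            (fun i _ => by positivity) (Finset.self_mem_range_succ j)
      _ ≤ Real.exp ((c/2)*t) := Real.sum_le_exp_of_nonneg (by positivity) _
  have h2 : t ^ j ≤ (Nat.factorial j : ℝ) * (2/c)^j * Real.exp ((c/2)*t) := by
    have h3 := mul_le_mul_of_nonneg_left h1
      (by positivity : (0:ℝ) ≤ (Nat.factorial j : ℝ) * (2/c)^j)
    calc t^j = (Nat.factorial j : ℝ) * (2/c)^j * (((c/2)*t)^j / (Nat.factorial j : ℝ)) := by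
          rw [mul_pow, div_pow, div_pow]
          field_simp
      _ ≤ _ := h3
  calc t^j * Real.exp (-c*t)
      ≤ ((Nat.factorial j : ℝ)*(2/c)^j * Real.exp ((c/2)*t)) * Real.exp (-c*t) :=
        mul_le_mul_of_nonneg_right h2 (Real.exp_pos _).le
    _ = (Nat.factorial j : ℝ)*(2/c)^j * Real.exp (-(c/2)*t) := by
        rw [mul_assoc, ← Real.exp_add]; congr 2; ring

lemma integrableOn_pow_exp_mul_f {α : ℝ} {f : ℝ → ℝ} (hfmeas : Measurable f)
    (hfnn : ∀ t ∈ Ioi (0:ℝ), 0 ≤ f t)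
    (hflap : ∀ c : ℝ, 0 ≤ c →
      ∫ t in Ioi (0:ℝ), Real.exp (-c * t) * f t = Real.exp (-(c ^ α)))
    {c : ℝ} (hc : 0 < c) (j : ℕ) :
    IntegrableOn (fun t => t ^ j * Real.exp (-c * t) * f t) (Ioi 0) := by
  have hbase : IntegrableOn (fun t => Real.exp (-(c/2) * t) * f t) (Ioi 0) :=
    integrableOn_exp_mul_f hflap (by positivity)
  have hK : IntegrableOn
      (fun t => (Nat.factorial j : ℝ) * (2/c)^j * (Real.exp (-(c/2) * t) * f t)) (Ioi 0) :=
    hbase.const_mul _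
  refine hK.mono' ?_ ?_
  · exact (((measurable_id.pow_const j).mul
      ((measurable_id.const_mul (-c)).exp)).mul hfmeas).aestronglyMeasurable
  · refine (ae_restrict_iff' measurableSet_Ioi).2 (Eventually.of_forall fun t ht => ?_)
    have ht' : (0:ℝ) < t := ht
    have hf := hfnn t ht
    have hnorm : ‖t ^ j * Real.exp (-c*t) * f t‖ = t ^ j * Real.exp (-c*t) * f t := by
      rw [Real.norm_eq_abs, abs_of_nonneg]
      exact mul_nonneg (mul_nonneg (by positivity) (Real.exp_pos _).le) hf
    rw [hnorm]
    calc t^j * Real.exp (-c*t) * f t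
        ≤ ((Nat.factorial j : ℝ)*(2/c)^j * Real.exp (-(c/2)*t)) * f t :=
          mul_le_mul_of_nonneg_right (pow_le_exp_aux hc ht'.le j) hf
      _ = (Nat.factorial j : ℝ)*(2/c)^j * (Real.exp (-(c/2)*t) * f t) := by ring

lemma laplace_moment {α : ℝ} {f : ℝ → ℝ} (hα0 : 0 < α) (hfmeas : Measurable f)
    (hfnn : ∀ t ∈ Ioi (0:ℝ), 0 ≤ f t)
    (hflap : ∀ c : ℝ, 0 ≤ c →
      ∫ t in Ioi (0:ℝ), Real.exp (-c * t) * f t = Real.exp (-(c ^ α)))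
    (j : ℕ) : ∀ s : ℝ, 0 < s →
      ∫ t in Ioi (0:ℝ), t ^ j * Real.exp (-s * t) * f t
        = α * Omega α j (s ^ α) * s ^ (α - (j:ℝ)) * Real.exp (-(s ^ α)) := by
  induction j with
  | zero =>
    intro s hs
    have h0 : ∫ t in Ioi (0:ℝ), t ^ 0 * Real.exp (-s * t) * f t = Real.exp (-(s ^ α)) := by
      rw [← hflap s hs.le]
      exact setIntegral_congr_fun measurableSet_Ioi fun t _ => by simp
    rw [h0, Omega, if_pos rfl]
    have hsα : (0:ℝ) < s ^ α := Real.rpow_pos_of_pos hs α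
    rw [show α * ((s^α)⁻¹/α) * s ^ (α - ((0:ℕ):ℝ)) * Real.exp (-(s^α)) = Real.exp (-(s^α)) by
      rw [Nat.cast_zero, sub_zero]; field_simp]
  | succ j ih =>
    intro s hs
    set μ := volume.restrict (Ioi (0:ℝ)) with hμ
    have hdiff : ∀ (t x : ℝ), HasDerivAt (fun u => t ^ j * Real.exp (-u * t) * f t)
        (-(t ^ (j+1) * Real.exp (-x * t) * f t)) x := by
      intro t x
      have h0 : HasDerivAt (fun u : ℝ => -u * t) (-t) x := by
        simpa using ((hasDerivAt_id x).neg.mul_const t)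
      have h1 : HasDerivAt (fun u : ℝ => Real.exp (-u * t)) (Real.exp (-x*t) * -t) x := h0.exp
      have h2 := (h1.const_mul (t^j)).mul_const (f t)
      refine h2.congr_deriv ?_
      rw [pow_succ]
      ring
    have hder := hasDerivAt_integral_of_dominated_loc_of_deriv_le (μ := μ) (𝕜 := ℝ)
      (F := fun u t => t ^ j * Real.exp (-u * t) * f t)
      (F' := fun u t => -(t ^ (j+1) * Real.exp (-u * t) * f t))
      (x₀ := s) (bound := fun t => t^(j+1) * Real.exp (-(s/2) * t) * |f t|)
      (Metric.ball_mem_nhds s (half_pos hs))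
      (Eventually.of_forall fun u =>
        (((measurable_id.pow_const j).mul
          ((measurable_id.const_mul (-u)).exp)).mul hfmeas).aestronglyMeasurable)
      (integrableOn_pow_exp_mul_f hfmeas hfnn hflap hs j)
      ((((measurable_id.pow_const (j+1)).mul
          ((measurable_id.const_mul (-s)).exp)).mul hfmeas).neg).aestronglyMeasurable
      ?_ ?_ (Eventually.of_forall fun t => fun x _ => hdiff t x)
    · have hL : HasDerivAt (fun u => ∫ t in Ioi (0:ℝ), t ^ j * Real.exp (-u * t) * f t)
          (∫ t in Ioi (0:ℝ), -(t ^ (j+1) * Real.exp (-s * t) * f t)) s := hder.2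
      have hR := closedForm_hasDeriv hα0 j hs
      have heq : (fun u => ∫ t in Ioi (0:ℝ), t ^ j * Real.exp (-u * t) * f t)
          =ᶠ[nhds s] (fun u => α * Omega α j (u ^ α) * u ^ (α - (j:ℝ)) * Real.exp (-(u ^ α))) := by
        filter_upwards [Ioi_mem_nhds hs] with u hu using ih u hu
      have hL2 : HasDerivAt (fun u => ∫ t in Ioi (0:ℝ), t ^ j * Real.exp (-u * t) * f t)
          (-(α * Omega α (j+1) (s ^ α) * s ^ (α - ((j:ℝ)+1)) * Real.exp (-(s ^ α)))) s :=
        hR.congr_of_eventuallyEq heq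
      have hval := hL.unique hL2
      rw [integral_neg] at hval
      have := neg_injective hval
      rw [this]
      push_cast
      ring
    · refine (ae_restrict_iff' measurableSet_Ioi).2 (Eventually.of_forall fun t ht => ?_)
      intro x hx
      have ht' : (0:ℝ) < t := ht
      have hxhalf : s/2 ≤ x := by
        have := abs_lt.1 (by simpa [Real.dist_eq] using Metric.mem_ball.1 hx)
        linarith [this.1]
      have : ‖-(t ^ (j+1) * Real.exp (-x * t) * f t)‖ = t ^ (j+1) * Real.exp (-x*t) * |f t| := by
        rw [norm_neg, Real.norm_eq_abs, abs_mul, abs_mul, abs_of_nonneg (by positivity : (0:ℝ) ≤ t^(j+1)),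
          abs_of_nonneg (Real.exp_pos _).le]
      rw [this]
      have hexp : Real.exp (-x*t) ≤ Real.exp (-(s/2)*t) := by
        apply Real.exp_le_exp.2
        nlinarith
      exact mul_le_mul_of_nonneg_right
        (mul_le_mul_of_nonneg_left hexp (by positivity)) (abs_nonneg _)
    · refine ((integrableOn_pow_exp_mul_f hfmeas hfnn hflap (half_pos hs) (j+1)).congr ?_)
      refine (ae_restrict_iff' measurableSet_Ioi).2 (Eventually.of_forall fun t ht => ?_)
      simp only [abs_of_nonneg (hfnn t ht)]
end moments



section measure
open Filter

lemma lintegral_comp_mul_left' {c : ℝ} (hc : 0 < c) (F : ℝ → ENNReal) (hF : Measurable F) :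
    ∫⁻ x, F x = ENNReal.ofReal c * ∫⁻ y, F (c * y) := by
  have h1 : ∫⁻ y, F (c * y) = ENNReal.ofReal c⁻¹ * ∫⁻ x, F x := by
    rw [← lintegral_map hF (measurable_const_mul c), Real.map_volume_mul_left hc.ne',
      lintegral_smul_measure, abs_inv, abs_of_pos hc, smul_eq_mul]
  rw [h1, ← mul_assoc, ← ENNReal.ofReal_mul hc.le, mul_inv_cancel₀ hc.ne',
    ENNReal.ofReal_one, one_mul]

lemma gamma_dens_meas (a : ℝ) :
    Measurable ((Set.Ioi (0 : ℝ)).indicator fun t =>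
      ENNReal.ofReal (t ^ (a - 1) * Real.exp (-t) / Real.Gamma a)) := by
  refine Measurable.indicator ?_ measurableSet_Ioi
  fun_prop

lemma gammaM_comp_div {a c : ℝ} (hc : 0 < c) {A : Set ℝ} (hA : MeasurableSet A) :
    gammaM a ((fun g => g / c) ⁻¹' A)
      = ∫⁻ y, ENNReal.ofReal c * ((Set.Ioi (0:ℝ)).indicator (fun t =>
          ENNReal.ofReal (t ^ (a-1) * Real.exp (-t) / Real.Gamma a)) (c * y)) * A.indicator 1 y := by
  have hB : MeasurableSet ((fun g => g / c) ⁻¹' A) := (measurable_id.div_const c) hA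
  set dG := (Set.Ioi (0:ℝ)).indicator (fun t =>
    ENNReal.ofReal (t ^ (a-1) * Real.exp (-t) / Real.Gamma a)) with hdGdef
  have hdG : Measurable dG := gamma_dens_meas a
  rw [gammaM, withDensity_apply _ hB, ← lintegral_indicator hB]
  rw [lintegral_comp_mul_left' hc _ (hdG.indicator hB)]
  rw [← lintegral_const_mul' _ _ ENNReal.ofReal_ne_top]
  refine lintegral_congr fun y => ?_
  by_cases hy : y ∈ A
  · have hmem : c * y ∈ (fun g => g / c) ⁻¹' A := by
      simp only [Set.mem_preimage, mul_div_cancel_left₀ _ hc.ne']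
      exact hy
    rw [Set.indicator_of_mem hmem, Set.indicator_of_mem hy]
    simp [mul_assoc]
  · have hmem : c * y ∉ (fun g => g / c) ⁻¹' A := by
      simp only [Set.mem_preimage, mul_div_cancel_left₀ _ hc.ne']
      exact hy
    rw [Set.indicator_of_notMem hmem, Set.indicator_of_notMem hy]
    simp
end measure

section positivity
open Filter

lemma integral_f_pos {α lam : ℝ} {f : ℝ → ℝ} (hfmeas : Measurable f)
    (hfnn : ∀ t ∈ Ioi (0:ℝ), 0 ≤ f t) (hfint : ∫ t in Ioi (0:ℝ), f t = 1)
    (hflap : ∀ c : ℝ, 0 ≤ c →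
      ∫ t in Ioi (0:ℝ), Real.exp (-c * t) * f t = Real.exp (-(c ^ α)))
    (hlam : 0 < lam) (n : ℕ) :
    0 < ∫ t in Ioi (0:ℝ), t^n * Real.exp (-lam*t) * f t := by
  have hgint := integrableOn_pow_exp_mul_f hfmeas hfnn hflap hlam n
  have hgnn : 0 ≤ᵐ[volume.restrict (Ioi 0)] fun t => t^n * Real.exp (-lam*t) * f t :=
    (ae_restrict_iff' measurableSet_Ioi).2 (Eventually.of_forall fun t ht =>
      mul_nonneg (mul_nonneg (pow_nonneg (le_of_lt ht) n) (Real.exp_pos _).le) (hfnn t ht))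
  rcases (integral_nonneg_of_ae hgnn).lt_or_eq with h | h
  · exact h
  exfalso
  have h0 : (fun t => t^n * Real.exp (-lam*t) * f t) =ᵐ[volume.restrict (Ioi 0)] 0 :=
    (integral_eq_zero_iff_of_nonneg_ae hgnn hgint).1 h.symm
  have hf0 : f =ᵐ[volume.restrict (Ioi 0)] 0 := by
    have hmem := ae_restrict_mem (μ := volume) (measurableSet_Ioi (a := (0:ℝ)))
    filter_upwards [h0, hmem] with t hgt ht
    have ht' : (0:ℝ) < t := ht
    have hpos : 0 < t^n * Real.exp (-lam*t) := mul_pos (pow_pos ht' n) (Real.exp_pos _)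
    rcases mul_eq_zero.mp hgt with h' | h'
    · exact absurd h' hpos.ne'
    · exact h'
  have hbad : (1:ℝ) = 0 := by
    rw [← hfint, integral_congr_ae hf0]; simp
  norm_num at hbad

lemma Omega_pos_aux {α lam : ℝ} {f : ℝ → ℝ} (hα0 : 0 < α) (hfmeas : Measurable f)
    (hfnn : ∀ t ∈ Ioi (0:ℝ), 0 ≤ f t) (hfint : ∫ t in Ioi (0:ℝ), f t = 1)
    (hflap : ∀ c : ℝ, 0 ≤ c →
      ∫ t in Ioi (0:ℝ), Real.exp (-c * t) * f t = Real.exp (-(c ^ α)))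
    (hlam : 0 < lam) (n : ℕ) :
    0 < Omega α n (lam ^ α) := by
  have hI := integral_f_pos hfmeas hfnn hfint hflap hlam n
  rw [laplace_moment hα0 hfmeas hfnn hflap n lam hlam] at hI
  have hX : (0:ℝ) < lam ^ (α - (n:ℝ)) := Real.rpow_pos_of_pos hlam _
  have hY := Real.exp_pos (-(lam^α))
  by_contra hcon
  push_neg at hcon
  have h3 : α * Omega α n (lam^α) ≤ 0 := mul_nonpos_iff.2 (Or.inl ⟨hα0.le, hcon⟩)
  have h4 : α * Omega α n (lam^α) * lam^(α-(n:ℝ)) ≤ 0 :=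
    mul_nonpos_iff.2 (Or.inr ⟨h3, hX.le⟩)
  have h5 : α * Omega α n (lam^α) * lam^(α-(n:ℝ)) * Real.exp (-(lam^α)) ≤ 0 :=
    mul_nonpos_iff.2 (Or.inr ⟨h4, hY.le⟩)
  linarith

lemma density_algebra1 {α lam s y F fv G : ℝ} {m k : ℕ} (hlam : 0 < lam) (hs : 0 < s)
    (hy : 0 < y) (hkm : k ≤ m) :
    (lam ^ ((m:ℝ)-(k:ℝ)-α) * F * s^(m-k) * Real.exp (-lam*s) * fv / G)
        * (lam*s * ((lam*s*y)^((k:ℝ)-1) * Real.exp (-(lam*s*y)) / Real.Gamma (k:ℝ)))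
      = (lam^((m:ℝ)-α) * F * y^((k:ℝ)-1) / (G * Real.Gamma (k:ℝ)))
        * (s^m * Real.exp (-(lam*(1+y))*s) * fv) := by
  have e1 : (lam*s*y) ^ ((k:ℝ)-1) = lam^((k:ℝ)-1) * s^((k:ℝ)-1) * y^((k:ℝ)-1) := by
    rw [Real.mul_rpow (by positivity) hy.le, Real.mul_rpow hlam.le hs.le]
  have e2 : Real.exp (-lam*s) * Real.exp (-(lam*s*y)) = Real.exp (-(lam*(1+y))*s) := by
    rw [← Real.exp_add]; congr 1; ring
  have e3 : (s:ℝ)^(m-k) * s^((k:ℝ)-1) * s = s^m := by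
    rw [← Real.rpow_natCast s (m-k), ← Real.rpow_add hs]
    rw [show s ^ (((m-k : ℕ):ℝ) + ((k:ℝ)-1)) * s = s ^ ((((m-k:ℕ):ℝ) + ((k:ℝ)-1)) + 1) from
      (Real.rpow_add_one hs.ne' _).symm]
    rw [show (((m-k:ℕ):ℝ) + ((k:ℝ)-1)) + 1 = ((m:ℕ):ℝ) by rw [Nat.cast_sub hkm]; ring]
    exact Real.rpow_natCast s m
  have e4 : lam^((m:ℝ)-(k:ℝ)-α) * lam^((k:ℝ)-1) * lam = lam^((m:ℝ)-α) := by
    rw [← Real.rpow_add hlam]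
    rw [show lam ^ (((m:ℝ)-(k:ℝ)-α) + ((k:ℝ)-1)) * lam
        = lam ^ ((((m:ℝ)-(k:ℝ)-α) + ((k:ℝ)-1)) + 1) from (Real.rpow_add_one hlam.ne' _).symm]
    congr 1
    ring
  calc (lam ^ ((m:ℝ)-(k:ℝ)-α) * F * s^(m-k) * Real.exp (-lam*s) * fv / G)
        * (lam*s * ((lam*s*y)^((k:ℝ)-1) * Real.exp (-(lam*s*y)) / Real.Gamma (k:ℝ)))
      = (lam ^ ((m:ℝ)-(k:ℝ)-α) * lam^((k:ℝ)-1) * lam) * F * ((s:ℝ)^(m-k) * s^((k:ℝ)-1) * s)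
          * (Real.exp (-lam*s) * Real.exp (-(lam*s*y))) * y^((k:ℝ)-1) * fv
          / (G * Real.Gamma (k:ℝ)) := by
        rw [e1]; ring
    _ = _ := by rw [e2, e3, e4]; ring
end positivity


/-- **Lemma 1.** If `S = S_{α,m-k}(λ)` has density
`λ^{m-k-α} e^{λ^α} t^{m-k} e^{-λ t} f_α(t)/(α Ω_{m-k}(λ^α))` and `G ~ Gamma(k)` is
independent, then `G/(λ S) = Y_{m,m-k}(λ)/λ` has density
`y ↦ (Ω_m(λ^α(1+y)^α)/(Γ(k) Ω_{m-k}(λ^α))) y^{k-1} (1+y)^{α-m} e^{-(λ^α(1+y)^α - λ^α)}`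
on `(0,∞)`. -/
theorem stmt13 (α : ℝ) (hα : α ∈ Set.Ioo (0 : ℝ) 1) (lam : ℝ) (hlam : 0 < lam)
    (m k : ℕ) (hm : 1 ≤ m) (hk : 1 ≤ k) (hkm : k ≤ m) (f : ℝ → ℝ) (hfmeas : Measurable f)
    (hfnn : ∀ t ∈ Set.Ioi (0 : ℝ), 0 ≤ f t)
    (hfint : ∫ t in Set.Ioi (0 : ℝ), f t = 1)
    (hflap : ∀ c : ℝ, 0 ≤ c →
      ∫ t in Set.Ioi (0 : ℝ), Real.exp (-c * t) * f t = Real.exp (-(c ^ α))) :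
    Measure.map (fun p : ℝ × ℝ => p.2 / (lam * p.1))
        ((volume.withDensity ((Set.Ioi (0 : ℝ)).indicator fun t =>
            ENNReal.ofReal (lam ^ ((m : ℝ) - (k : ℝ) - α) * Real.exp (lam ^ α) *
              t ^ (m - k) * Real.exp (-lam * t) * f t /
                (α * Omega α (m - k) (lam ^ α))))).prod (gammaM (k : ℝ)))
      = volume.withDensity ((Set.Ioi (0 : ℝ)).indicator fun y =>
          ENNReal.ofReal (Omega α m (lam ^ α * (1 + y) ^ α) /
              (Real.Gamma (k : ℝ) * Omega α (m - k) (lam ^ α)) *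
            y ^ (k - 1) * (1 + y) ^ (α - (m : ℝ)) *
            Real.exp (-(lam ^ α * (1 + y) ^ α - lam ^ α)))) := by
  obtain ⟨hα0, hα1⟩ := hα
  have hΓk : (0:ℝ) < Real.Gamma (k:ℝ) := Real.Gamma_pos_of_pos (by exact_mod_cast hk)
  have hΩn : 0 < Omega α (m-k) (lam ^ α) :=
    Omega_pos_aux hα0 hfmeas hfnn hfint hflap hlam (m-k)
  have hφ : Measurable (fun p : ℝ × ℝ => p.2 / (lam * p.1)) :=
    measurable_snd.div (measurable_fst.const_mul lam)
  set DS : ℝ → ENNReal := (Set.Ioi (0 : ℝ)).indicator fun t =>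
    ENNReal.ofReal (lam ^ ((m : ℝ) - (k : ℝ) - α) * Real.exp (lam ^ α) *
      t ^ (m - k) * Real.exp (-lam * t) * f t /
        (α * Omega α (m - k) (lam ^ α))) with hDS
  set RD : ℝ → ENNReal := (Set.Ioi (0 : ℝ)).indicator fun y =>
    ENNReal.ofReal (Omega α m (lam ^ α * (1 + y) ^ α) /
        (Real.Gamma (k : ℝ) * Omega α (m - k) (lam ^ α)) *
      y ^ (k - 1) * (1 + y) ^ (α - (m : ℝ)) *
      Real.exp (-(lam ^ α * (1 + y) ^ α - lam ^ α))) with hRD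
  set dG : ℝ → ENNReal := (Set.Ioi (0:ℝ)).indicator (fun t =>
    ENNReal.ofReal (t ^ ((k:ℝ) - 1) * Real.exp (-t) / Real.Gamma (k:ℝ))) with hdGdef
  have hdGmeas : Measurable dG := gamma_dens_meas (k:ℝ)
  have hDSmeas : Measurable DS := by
    rw [hDS]
    refine Measurable.indicator (ENNReal.measurable_ofReal.comp ?_) measurableSet_Ioi
    exact (((measurable_const.mul (measurable_id.pow_const (m-k))).mul
      ((measurable_id.const_mul (-lam)).exp)).mul hfmeas).div_const _
  haveI : SFinite (gammaM (k:ℝ)) := by unfold gammaM; infer_instance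
  refine Measure.ext fun A hA => ?_
  have hB : MeasurableSet ((fun p : ℝ × ℝ => p.2 / (lam * p.1)) ⁻¹' A) := hφ hA
  rw [Measure.map_apply hφ hA, Measure.prod_apply hB,
    lintegral_withDensity_eq_lintegral_mul _ hDSmeas (measurable_measure_prodMk_left hB)]
  set Ψ : ℝ → ℝ → ENNReal := fun s y =>
    DS s * (ENNReal.ofReal (lam*s) * dG ((lam*s)*y) * A.indicator 1 y) with hΨ
  -- key pointwise inner-integral computation
  have key : ∀ y : ℝ, (∫⁻ s, DS s * (ENNReal.ofReal (lam*s) * dG ((lam*s)*y))) = RD y := by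
    intro y
    by_cases hy : y ∈ Set.Ioi (0:ℝ)
    · have hy' : (0:ℝ) < y := hy
      have hc : 0 < lam * (1+y) := by positivity
      have hpt : ∀ s : ℝ, DS s * (ENNReal.ofReal (lam*s) * dG ((lam*s)*y))
          = (Set.Ioi (0:ℝ)).indicator (fun s => ENNReal.ofReal (
              (lam^((m:ℝ)-α) * Real.exp (lam^α) * y^((k:ℝ)-1) /
                ((α * Omega α (m-k) (lam^α)) * Real.Gamma (k:ℝ)))
              * (s^m * Real.exp (-(lam*(1+y))*s) * f s))) s := by
        intro s
        by_cases hs : s ∈ Set.Ioi (0:ℝ)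
        · have hs' : (0:ℝ) < s := hs
          have hmem2 : (lam*s)*y ∈ Set.Ioi (0:ℝ) := by
            have : (0:ℝ) < lam*s*y := by positivity
            exact this
          rw [hDS, hdGdef, Set.indicator_of_mem hs, Set.indicator_of_mem hmem2,
            Set.indicator_of_mem hs]
          rw [← ENNReal.ofReal_mul (by positivity : (0:ℝ) ≤ lam*s)]
          have hdnn : 0 ≤ lam ^ ((m : ℝ) - (k : ℝ) - α) * Real.exp (lam ^ α) *
              s ^ (m - k) * Real.exp (-lam * s) * f s /
                (α * Omega α (m - k) (lam ^ α)) := by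
            apply div_nonneg _ (mul_pos hα0 hΩn).le
            exact mul_nonneg (mul_nonneg (mul_nonneg (mul_nonneg
              (Real.rpow_pos_of_pos hlam _).le (Real.exp_pos _).le)
              (pow_nonneg hs'.le _)) (Real.exp_pos _).le) (hfnn s hs)
          rw [← ENNReal.ofReal_mul hdnn]
          congr 1
          exact density_algebra1 hlam hs' hy' hkm
        · rw [hDS, hdGdef, Set.indicator_of_notMem hs, Set.indicator_of_notMem hs, zero_mul]
      rw [lintegral_congr hpt, lintegral_indicator measurableSet_Ioi]
      have hbase := integrableOn_pow_exp_mul_f hfmeas hfnn hflap hc m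
      have hints : IntegrableOn (fun s =>
          (lam^((m:ℝ)-α) * Real.exp (lam^α) * y^((k:ℝ)-1) /
            ((α * Omega α (m-k) (lam^α)) * Real.Gamma (k:ℝ)))
          * (s^m * Real.exp (-(lam*(1+y))*s) * f s)) (Set.Ioi 0) := hbase.const_mul _
      have hCnn : 0 ≤ lam^((m:ℝ)-α) * Real.exp (lam^α) * y^((k:ℝ)-1) /
          ((α * Omega α (m-k) (lam^α)) * Real.Gamma (k:ℝ)) := by
        apply div_nonneg _ (mul_pos (mul_pos hα0 hΩn) hΓk).le
        exact mul_nonneg (mul_nonneg (Real.rpow_pos_of_pos hlam _).le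
          (Real.exp_pos _).le) (Real.rpow_pos_of_pos hy' _).le
      have hnnae : 0 ≤ᵐ[volume.restrict (Set.Ioi (0:ℝ))] (fun s =>
          (lam^((m:ℝ)-α) * Real.exp (lam^α) * y^((k:ℝ)-1) /
            ((α * Omega α (m-k) (lam^α)) * Real.Gamma (k:ℝ)))
          * (s^m * Real.exp (-(lam*(1+y))*s) * f s)) := by
        refine (ae_restrict_iff' measurableSet_Ioi).2 (Filter.Eventually.of_forall fun s hs => ?_)
        exact mul_nonneg hCnn (mul_nonneg (mul_nonneg (pow_nonneg (le_of_lt hs) _)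
          (Real.exp_pos _).le) (hfnn s hs))
      rw [← MeasureTheory.ofReal_integral_eq_lintegral_ofReal hints hnnae]
      rw [integral_const_mul]
      rw [laplace_moment hα0 hfmeas hfnn hflap m (lam*(1+y)) hc]
      rw [hRD, Set.indicator_of_mem hy]
      congr 1
      have r1 : (lam*(1+y)) ^ α = lam^α * (1+y)^α := Real.mul_rpow hlam.le (by positivity)
      have r2 : (lam*(1+y)) ^ (α - (m:ℝ)) = lam^(α-(m:ℝ)) * (1+y)^(α-(m:ℝ)) :=
        Real.mul_rpow hlam.le (by positivity)
      have r5 : y ^ ((k:ℝ)-1) = y ^ (k-1 : ℕ) := by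
        rw [show (k:ℝ)-1 = ((k-1:ℕ):ℝ) by rw [Nat.cast_sub hk]; push_cast; ring,
          Real.rpow_natCast]
      have r4 : Real.exp (lam^α) * Real.exp (-(lam^α*(1+y)^α))
          = Real.exp (-(lam^α*(1+y)^α - lam^α)) := by
        rw [← Real.exp_add]; congr 1; ring
      have r3' : lam^(α-(m:ℝ)) = (lam^((m:ℝ)-α))⁻¹ := by
        rw [← Real.rpow_neg hlam.le]; congr 1; ring
      rw [r1, r2, r5, ← r4, r3']
      have hlamne : lam^((m:ℝ)-α) ≠ 0 := (Real.rpow_pos_of_pos hlam _).ne'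
      field_simp
    · rw [hRD, Set.indicator_of_notMem hy]
      have h0 : ∀ s, DS s * (ENNReal.ofReal (lam*s) * dG ((lam*s)*y)) = 0 := by
        intro s
        by_cases hs : s ∈ Set.Ioi (0:ℝ)
        · have hnm : (lam*s)*y ∉ Set.Ioi (0:ℝ) := by
            simp only [Set.mem_Ioi, not_lt]
            exact mul_nonpos_iff.2 (Or.inl ⟨(mul_pos hlam hs).le, not_lt.1 hy⟩)
          rw [hdGdef, Set.indicator_of_notMem hnm, mul_zero, mul_zero]
        · rw [hDS, Set.indicator_of_notMem hs, zero_mul]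
      rw [lintegral_congr h0, lintegral_zero]
  -- sections of the preimage
  have hsec : ∀ s ∈ Set.Ioi (0:ℝ),
      gammaM (k:ℝ) (Prod.mk s ⁻¹' ((fun p : ℝ×ℝ => p.2/(lam*p.1)) ⁻¹' A))
        = ∫⁻ y, ENNReal.ofReal (lam*s) * dG ((lam*s) * y) * A.indicator 1 y := by
    intro s hs
    have hpre : Prod.mk s ⁻¹' ((fun p : ℝ×ℝ => p.2/(lam*p.1)) ⁻¹' A)
        = (fun g => g / (lam*s)) ⁻¹' A := rfl
    rw [hpre, gammaM_comp_div (mul_pos hlam hs) hA, hdGdef]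
  have hstep : ∀ s, (DS * fun s => gammaM (k:ℝ)
      (Prod.mk s ⁻¹' ((fun p : ℝ×ℝ => p.2/(lam*p.1)) ⁻¹' A))) s = ∫⁻ y, Ψ s y := by
    intro s
    rw [Pi.mul_apply]
    by_cases hs : s ∈ Set.Ioi (0:ℝ)
    · have hDSne : DS s ≠ ⊤ := by
        rw [hDS, Set.indicator_of_mem hs]
        exact ENNReal.ofReal_ne_top
      rw [hsec s hs, ← lintegral_const_mul' _ _ hDSne]
    · have h0 : DS s = 0 := by rw [hDS]; exact Set.indicator_of_notMem hs _
      rw [h0, zero_mul]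
      symm
      have : ∀ y, Ψ s y = 0 := fun y => by rw [hΨ]; simp only [h0, zero_mul]
      rw [lintegral_congr this, lintegral_zero]
  rw [lintegral_congr hstep]
  have hΨmeas : AEMeasurable (Function.uncurry Ψ) (volume.prod volume) := by
    have hrepr : Function.uncurry Ψ = fun p : ℝ×ℝ =>
        DS p.1 * (ENNReal.ofReal (lam*p.1) * dG ((lam*p.1)*p.2) * A.indicator 1 p.2) := rfl
    rw [hrepr]
    exact ((hDSmeas.comp measurable_fst).mul
      (((ENNReal.measurable_ofReal.comp (measurable_fst.const_mul lam)).mul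
        (hdGmeas.comp ((measurable_fst.const_mul lam).mul measurable_snd))).mul
        ((measurable_one.indicator hA).comp measurable_snd))).aemeasurable
  rw [lintegral_lintegral_swap hΨmeas]
  rw [withDensity_apply _ hA, ← lintegral_indicator hA]
  refine lintegral_congr fun y => ?_
  by_cases hyA : y ∈ A
  · rw [Set.indicator_of_mem hyA]
    have h1 : ∀ s, Ψ s y = DS s * (ENNReal.ofReal (lam*s) * dG ((lam*s)*y)) := by
      intro s
      rw [hΨ]
      simp only [Set.indicator_of_mem hyA, Pi.one_apply, mul_one]
    rw [lintegral_congr h1]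
    exact key y
  · rw [Set.indicator_of_notMem hyA]
    have h1 : ∀ s, Ψ s y = 0 := fun s => by
      rw [hΨ]
      simp only [Set.indicator_of_notMem hyA, mul_zero, zero_mul]
    rw [lintegral_congr h1, lintegral_zero]
end

section
/- Fix α ∈ (0,1) and a > 0. Let β have the Beta(1-α, α) distribution and let R have the Beta(a, 1) distribution, with β and R independent. Then β(1-R)/R has the same distribution as γ_{1-α}/γ_a, the ratio of independent Gamma(1-α) and Gamma(a) random variables; consequently W = (β(1-R)/R + 1)^{-1} has the Beta(a, 1-α) distribution, i.e. 1 - W has the Beta(1-α, a) distribution. -/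
open MeasureTheory Set
open scoped ENNReal

/-- The Beta(a,b) distribution, with density `t^{a-1}(1-t)^{b-1} Γ(a+b)/(Γ(a)Γ(b))`
on `(0,1)`. -/
noncomputable def betaM (a b : ℝ) : Measure ℝ :=
  volume.withDensity ((Set.Ioo (0 : ℝ) 1).indicator fun t =>
    ENNReal.ofReal (t ^ (a - 1) * (1 - t) ^ (b - 1) * Real.Gamma (a + b) /
      (Real.Gamma a * Real.Gamma b)))

/-! ### Generic change-of-variables helpers -/

lemma lintegral_image_deriv {s : Set ℝ} {f f' : ℝ → ℝ}
    (hs : MeasurableSet s) (hf' : ∀ x ∈ s, HasDerivWithinAt f (f' x) s x)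
    (hf : InjOn f s) (g : ℝ → ℝ≥0∞) :
    ∫⁻ x in f '' s, g x = ∫⁻ x in s, ENNReal.ofReal |f' x| * g (f x) := by
  simpa only [ContinuousLinearMap.det_toSpanSingleton] using
    lintegral_image_eq_lintegral_abs_det_fderiv_mul volume hs
      (fun x hx => (hf' x hx).hasFDerivWithinAt) hf g

lemma setLIntegral_indicator' {A I : Set ℝ} (hI : MeasurableSet I) (d : ℝ → ℝ≥0∞) :
    ∫⁻ x in A, I.indicator d x = ∫⁻ x in I ∩ A, d x := by
  rw [lintegral_indicator hI, Measure.restrict_restrict hI]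

/-- Pushforward of a density measure under a diffeomorphism-like map. -/
lemma map_wd {I J : Set ℝ} (hI : MeasurableSet I) (hJ : MeasurableSet J)
    {T σ σ' : ℝ → ℝ} (hT : Measurable T)
    (hσd : ∀ t ∈ J, HasDerivWithinAt σ (σ' t) J t)
    (hinj : Set.InjOn σ J)
    (hσJ : Set.MapsTo σ J I) (hTI : Set.MapsTo T I J)
    (hl : ∀ t ∈ J, T (σ t) = t) (hr : ∀ x ∈ I, σ (T x) = x)
    (d : ℝ → ℝ≥0∞) :
    Measure.map T (volume.withDensity (I.indicator d))
      = volume.withDensity (J.indicator fun t => ENNReal.ofReal |σ' t| * d (σ t)) := by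
  ext s hs
  have him : σ '' (s ∩ J) = T ⁻¹' s ∩ I := by
    ext x
    constructor
    · rintro ⟨t, ⟨hts, htJ⟩, rfl⟩
      exact ⟨by simpa [Set.mem_preimage, hl t htJ] using hts, hσJ htJ⟩
    · rintro ⟨hxs, hxI⟩
      exact ⟨T x, ⟨hxs, hTI hxI⟩, hr x hxI⟩
  rw [Measure.map_apply hT hs, withDensity_apply _ (hT hs), withDensity_apply _ hs,
    setLIntegral_indicator' hI, setLIntegral_indicator' hJ, inter_comm I, inter_comm J, ← him,
    lintegral_image_deriv (hs.inter hJ)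
      (fun t ht => (hσd t ht.2).mono inter_subset_right)
      (hinj.mono inter_subset_right)]

/-- Pushforward of a product of density measures under a two-variable map,
computed by slicing. -/
lemma map_prod_wd {f : ℝ → ℝ → ℝ} (hf : Measurable (Function.uncurry f))
    {d1 : ℝ → ℝ≥0∞} (hd1m : Measurable d1) {I : Set ℝ} (hI : MeasurableSet I)
    (hd1 : ∀ x, d1 x ≠ ⊤)
    {μ2 : Measure ℝ} [SFinite μ2]
    {g : ℝ → ℝ → ℝ≥0∞} (hg : Measurable (Function.uncurry g))
    (hmap : ∀ x ∈ I, Measure.map (f x) μ2 = volume.withDensity (g x))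
    {h : ℝ → ℝ≥0∞}
    (hh : ∀ t, (∫⁻ x, I.indicator d1 x * g x t) = h t) :
    Measure.map (fun p : ℝ × ℝ => f p.1 p.2) ((volume.withDensity (I.indicator d1)).prod μ2)
      = volume.withDensity h := by
  have hindm : Measurable (I.indicator d1) := hd1m.indicator hI
  have hindt : ∀ x, I.indicator d1 x ≠ ⊤ := by
    intro x
    by_cases hx : x ∈ I
    · rw [Set.indicator_of_mem hx]; exact hd1 x
    · simp [Set.indicator_of_notMem hx]
  ext s hs
  have hfs : MeasurableSet ((fun p : ℝ × ℝ => f p.1 p.2) ⁻¹' s) := hf hs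
  rw [Measure.map_apply (by exact hf) hs, Measure.prod_apply hfs, withDensity_apply _ hs,
    lintegral_withDensity_eq_lintegral_mul _ hindm (measurable_measure_prodMk_left hfs)]
  have step1 : ∀ x, (I.indicator d1 * fun x =>
        μ2 (Prod.mk x ⁻¹' ((fun p : ℝ × ℝ => f p.1 p.2) ⁻¹' s))) x
      = ∫⁻ t in s, I.indicator d1 x * g x t := by
    intro x
    simp only [Pi.mul_apply]
    by_cases hx : x ∈ I
    · have hpre : Prod.mk x ⁻¹' ((fun p : ℝ × ℝ => f p.1 p.2) ⁻¹' s) = f x ⁻¹' s := rfl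
      rw [hpre, ← Measure.map_apply (show Measurable (f x) from
          hf.comp measurable_prodMk_left) hs, hmap x hx,
        withDensity_apply _ hs, ← lintegral_const_mul' _ _ (hindt x)]
    · simp [Set.indicator_of_notMem hx]
  rw [lintegral_congr step1, lintegral_lintegral_swap]
  · refine setLIntegral_congr_fun hs (fun t _ => hh t)
  · exact ((hd1m.indicator hI).comp measurable_fst).mul hg |>.aemeasurable

/-! ### The Beta and Gamma integrals -/

lemma integrableOn_betaInt {p q : ℝ} (hp : 0 < p) (hq : 0 < q) :
    IntegrableOn (fun x : ℝ => x ^ (p - 1) * (1 - x) ^ (q - 1)) (Ioc 0 1) := by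
  have hc := Complex.betaIntegral_convergent (u := (p : ℂ)) (v := (q : ℂ)) (by simpa using hp)
    (by simpa using hq)
  rw [intervalIntegrable_iff_integrableOn_Ioc_of_le zero_le_one] at hc
  have := hc.re
  refine (IntegrableOn.congr_fun this ?_ measurableSet_Ioc)
  intro x hx
  have hx0 : (0:ℝ) ≤ x := le_of_lt hx.1
  have hx1 : (0:ℝ) ≤ 1 - x := by linarith [hx.2]
  have e1 : ((x : ℂ)) ^ ((p : ℂ) - 1) = ((x ^ (p - 1) : ℝ) : ℂ) := by
    rw [Complex.ofReal_cpow hx0]; norm_cast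
  have e2 : ((1 : ℂ) - (x : ℂ)) ^ ((q : ℂ) - 1) = (((1 - x) ^ (q - 1) : ℝ) : ℂ) := by
    rw [Complex.ofReal_cpow hx1]; push_cast; ring_nf
  simp [e1, e2, ← Complex.ofReal_mul]

lemma integral_betaInt {p q : ℝ} (hp : 0 < p) (hq : 0 < q) :
    ∫ x in Ioo (0:ℝ) 1, x ^ (p - 1) * (1 - x) ^ (q - 1)
      = Real.Gamma p * Real.Gamma q / Real.Gamma (p + q) := by
  have key : Complex.betaIntegral p q
      = ((∫ x in (0:ℝ)..1, x ^ (p - 1) * (1 - x) ^ (q - 1) : ℝ) : ℂ) := by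
    rw [Complex.betaIntegral, ← intervalIntegral.integral_ofReal]
    refine intervalIntegral.integral_congr fun x hx => ?_
    rw [uIcc_of_le zero_le_one] at hx
    have hx0 : (0:ℝ) ≤ x := hx.1
    have hx1 : (0:ℝ) ≤ 1 - x := by linarith [hx.2]
    have e1 : ((x : ℂ)) ^ ((p : ℂ) - 1) = ((x ^ (p - 1) : ℝ) : ℂ) := by
      rw [Complex.ofReal_cpow hx0]; norm_cast
    have e2 : ((1 : ℂ) - (x : ℂ)) ^ ((q : ℂ) - 1) = (((1 - x) ^ (q - 1) : ℝ) : ℂ) := by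
      rw [Complex.ofReal_cpow hx1]; push_cast; ring_nf
    simp [e1, e2, ← Complex.ofReal_mul]
  have hΓ := Complex.Gamma_mul_Gamma_eq_betaIntegral
    (s := (p : ℂ)) (t := (q : ℂ)) (by simpa using hp) (by simpa using hq)
  rw [key] at hΓ
  have hpq : ((p : ℂ)) + q = ((p + q : ℝ) : ℂ) := by push_cast; ring
  rw [hpq, Complex.Gamma_ofReal, Complex.Gamma_ofReal, Complex.Gamma_ofReal] at hΓ
  have hreal : Real.Gamma p * Real.Gamma q
      = Real.Gamma (p + q) * ∫ x in (0:ℝ)..1, x ^ (p - 1) * (1 - x) ^ (q - 1) := by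
    exact_mod_cast hΓ
  have hΓpq : Real.Gamma (p + q) ≠ 0 := (Real.Gamma_pos_of_pos (by linarith)).ne'
  rw [intervalIntegral.integral_of_le zero_le_one, integral_Ioc_eq_integral_Ioo] at hreal
  field_simp
  linarith [hreal]

lemma lintegral_betaInt {p q : ℝ} (hp : 0 < p) (hq : 0 < q) :
    ∫⁻ x in Ioo (0:ℝ) 1, ENNReal.ofReal (x ^ (p - 1) * (1 - x) ^ (q - 1))
      = ENNReal.ofReal (Real.Gamma p * Real.Gamma q / Real.Gamma (p + q)) := by
  rw [← integral_betaInt hp hq, ← ofReal_integral_eq_lintegral_ofReal]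
  · exact (integrableOn_betaInt hp hq).mono_set Ioo_subset_Ioc_self
  · filter_upwards [ae_restrict_mem measurableSet_Ioo] with x hx
    have h1 : 0 < x := hx.1
    have h2 : 0 < 1 - x := by linarith [hx.2]
    positivity

lemma lintegral_gamma1 {s : ℝ} (hs : 0 < s) :
    ∫⁻ x in Ioi (0:ℝ), ENNReal.ofReal (x ^ (s - 1) * Real.exp (-x))
      = ENNReal.ofReal (Real.Gamma s) := by
  have : Real.Gamma s = ∫ x in Ioi (0:ℝ), x ^ (s - 1) * Real.exp (-x) := by
    rw [Real.Gamma_eq_integral hs]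
    exact setIntegral_congr_fun measurableSet_Ioi fun x _ => mul_comm _ _
  rw [this, ← ofReal_integral_eq_lintegral_ofReal]
  · exact (Real.GammaIntegral_convergent hs).congr_fun (fun x _ => mul_comm _ _)
      measurableSet_Ioi
  · filter_upwards [ae_restrict_mem measurableSet_Ioi] with x hx
    have : (0:ℝ) < x := hx
    positivity

lemma lintegral_gammaC {s c : ℝ} (hs : 0 < s) (hc : 0 < c) :
    ∫⁻ x in Ioi (0:ℝ), ENNReal.ofReal (x ^ (s - 1) * Real.exp (-(c * x)))
      = ENNReal.ofReal ((1 / c) ^ s * Real.Gamma s) := by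
  have him : (fun y : ℝ => y / c) '' Ioi 0 = Ioi 0 := by
    ext x
    constructor
    · rintro ⟨y, hy, rfl⟩
      exact div_pos hy hc
    · intro hx
      exact ⟨x * c, mul_pos hx hc, by field_simp⟩
  have hderiv : ∀ y ∈ Ioi (0:ℝ), HasDerivWithinAt (fun y : ℝ => y / c) (1 / c) (Ioi 0) y := by
    intro y _
    simpa using ((hasDerivAt_id y).div_const c).hasDerivWithinAt
  have hinj : InjOn (fun y : ℝ => y / c) (Ioi 0) := fun y1 _ y2 _ h => by
    field_simp at h; exact h
  rw [← him, lintegral_image_deriv measurableSet_Ioi hderiv hinj]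
  have : ∀ y ∈ Ioi (0:ℝ), ENNReal.ofReal |1 / c|
        * ENNReal.ofReal ((y / c) ^ (s - 1) * Real.exp (-(c * (y / c))))
      = ENNReal.ofReal ((1 / c) ^ s) * ENNReal.ofReal (y ^ (s - 1) * Real.exp (-y)) := by
    intro y hy
    have hy0 : (0:ℝ) < y := hy
    rw [← ENNReal.ofReal_mul (by positivity), ← ENNReal.ofReal_mul (by positivity)]
    congr 1
    rw [abs_of_pos (by positivity), Real.div_rpow hy0.le hc.le,
      show c * (y / c) = y by field_simp]
    have hpow : c ^ s = c ^ (s - 1) * c := by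
      rw [← Real.rpow_add_one hc.ne' (s - 1), sub_add_cancel]
    rw [show (1:ℝ) / c = c⁻¹ by ring, Real.inv_rpow hc.le, hpow, mul_inv]
    have hcs1 : c ^ (s - 1) ≠ 0 := (Real.rpow_pos_of_pos hc _).ne'
    field_simp
  rw [setLIntegral_congr_fun measurableSet_Ioi this,
    lintegral_const_mul' _ _ ENNReal.ofReal_ne_top, lintegral_gamma1 hs,
    ← ENNReal.ofReal_mul (by positivity)]

/-! ### The two inner one-dimensional pushforwards -/

lemma rpow_neg_add {u a : ℝ} (hu : 0 < u) : u ^ (-(a + 1)) = (u ^ (2:ℕ) * u ^ (a - 1))⁻¹ := by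
  rw [← Real.rpow_natCast u 2, ← Real.rpow_add hu, ← Real.rpow_neg hu.le]
  congr 1
  push_cast
  ring

lemma mapInnerA {a x : ℝ} (ha : 0 < a) (hx : 0 < x) :
    Measure.map (fun r => x * (1 - r) / r) (betaM a 1)
      = volume.withDensity ((Ioi 0).indicator fun t =>
          ENNReal.ofReal (a * x ^ a * (x + t) ^ (-(a + 1)))) := by
  have hΓa : (0:ℝ) < Real.Gamma a := Real.Gamma_pos_of_pos ha
  have key := map_wd (I := Ioo 0 1) (J := Ioi 0)
    (T := fun r => x * (1 - r) / r) (σ := fun t => x / (x + t))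
    (σ' := fun t => -(x / (x + t) ^ 2))
    measurableSet_Ioo measurableSet_Ioi
    (by fun_prop)
    (fun t ht => by
      have hxt : x + t ≠ 0 := by have : (0:ℝ) < t := ht; positivity
      have h1 : HasDerivAt (fun t : ℝ => x + t) 1 t := (hasDerivAt_id t).const_add x
      have := (hasDerivAt_const t x).div h1 hxt
      have heq : (0 * (x + t) - x * 1) / (x + t) ^ 2 = -(x / (x + t) ^ 2) := by ring
      rw [heq] at this
      exact this.hasDerivWithinAt)
    (fun t1 h1 t2 h2 h => by
      simp only at h
      have e1 : x + t1 ≠ 0 := by have : (0:ℝ) < t1 := h1; positivity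
      have e2 : x + t2 ≠ 0 := by have : (0:ℝ) < t2 := h2; positivity
      field_simp at h
      linarith)
    (fun t ht => by
      have ht' : (0:ℝ) < t := ht
      constructor
      · positivity
      · rw [div_lt_one (by positivity)]; linarith)
    (fun r hr => by
      have h0 : (0:ℝ) < r := hr.1
      have h1 : r < 1 := hr.2
      show (0:ℝ) < x * (1 - r) / r
      have : (0:ℝ) < 1 - r := by linarith
      positivity)
    (fun t ht => by
      have ht' : (0:ℝ) < t := ht
      have hxt : x + t ≠ 0 := by positivity
      field_simp
      ring)
    (fun r hr => by
      have h0 : (0:ℝ) < r := hr.1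
      have h1 : r < 1 := hr.2
      have h2 : (0:ℝ) < x + x * (1 - r) / r := by
        have : (0:ℝ) < 1 - r := by linarith
        positivity
      field_simp
      ring)
    (fun t => ENNReal.ofReal (t ^ (a - 1) * (1 - t) ^ ((1:ℝ) - 1) * Real.Gamma (a + 1) /
      (Real.Gamma a * Real.Gamma 1)))
  rw [show betaM a 1 = volume.withDensity ((Set.Ioo (0 : ℝ) 1).indicator fun t =>
    ENNReal.ofReal (t ^ (a - 1) * (1 - t) ^ ((1:ℝ) - 1) * Real.Gamma (a + 1) /
      (Real.Gamma a * Real.Gamma 1))) from rfl, key]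
  congr 1
  funext t
  by_cases ht : t ∈ Ioi (0:ℝ)
  · rw [Set.indicator_of_mem ht, Set.indicator_of_mem ht]
    have ht' : (0:ℝ) < t := ht
    have hxt : (0:ℝ) < x + t := by positivity
    rw [← ENNReal.ofReal_mul (by positivity)]
    congr 1
    rw [abs_neg, abs_of_pos (by positivity), sub_self, Real.rpow_zero, Real.Gamma_one,
      Real.Gamma_add_one ha.ne', Real.div_rpow hx.le hxt.le, rpow_neg_add hxt,
      show x ^ a = x * x ^ (a - 1) by
        nth_rewrite 1 [show a = 1 + (a - 1) by ring]
        rw [Real.rpow_add hx, Real.rpow_one]]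
    have h1 : (x + t) ^ (a - 1) ≠ 0 := (Real.rpow_pos_of_pos hxt _).ne'
    have h2 : x ^ (a - 1) ≠ 0 := (Real.rpow_pos_of_pos hx _).ne'
    field_simp
  · rw [Set.indicator_of_notMem ht, Set.indicator_of_notMem ht]

lemma mapInnerB {a x : ℝ} (ha : 0 < a) (hx : 0 < x) :
    Measure.map (fun r => x / r) (gammaM a)
      = volume.withDensity ((Ioi 0).indicator fun t =>
          ENNReal.ofReal (x ^ a * t ^ (-(a + 1)) * Real.exp (-(x / t)) / Real.Gamma a)) := by
  have hΓa : (0:ℝ) < Real.Gamma a := Real.Gamma_pos_of_pos ha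
  have key := map_wd (I := Ioi 0) (J := Ioi 0)
    (T := fun r => x / r) (σ := fun t => x / t) (σ' := fun t => -(x / t ^ 2))
    measurableSet_Ioi measurableSet_Ioi
    (by fun_prop)
    (fun t ht => by
      have ht' : (0:ℝ) < t := ht
      have h1 : HasDerivAt (fun t : ℝ => t) 1 t := hasDerivAt_id t
      have := (hasDerivAt_const t x).div h1 ht'.ne'
      have heq : (0 * t - x * 1) / t ^ 2 = -(x / t ^ 2) := by ring
      rw [heq] at this
      exact this.hasDerivWithinAt)
    (fun t1 h1 t2 h2 h => by
      simp only at h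
      have e1 : (0:ℝ) < t1 := h1
      have e2 : (0:ℝ) < t2 := h2
      field_simp at h
      exact h.symm)
    (fun t ht => by
      have ht' : (0:ℝ) < t := ht
      show (0:ℝ) < x / t
      positivity)
    (fun r hr => by
      have h0 : (0:ℝ) < r := hr
      show (0:ℝ) < x / r
      positivity)
    (fun t ht => by
      have ht' : (0:ℝ) < t := ht
      field_simp)
    (fun r hr => by
      have h0 : (0:ℝ) < r := hr
      field_simp)
    (fun t => ENNReal.ofReal (t ^ (a - 1) * Real.exp (-t) / Real.Gamma a))
  rw [show gammaM a = volume.withDensity ((Set.Ioi (0 : ℝ)).indicator fun t =>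
    ENNReal.ofReal (t ^ (a - 1) * Real.exp (-t) / Real.Gamma a)) from rfl, key]
  congr 1
  funext t
  by_cases ht : t ∈ Ioi (0:ℝ)
  · rw [Set.indicator_of_mem ht, Set.indicator_of_mem ht]
    have ht' : (0:ℝ) < t := ht
    rw [← ENNReal.ofReal_mul (by positivity)]
    congr 1
    rw [abs_neg, abs_of_pos (by positivity), Real.div_rpow hx.le ht'.le, rpow_neg_add ht',
      show x ^ a = x * x ^ (a - 1) by
        nth_rewrite 1 [show a = 1 + (a - 1) by ring]
        rw [Real.rpow_add hx, Real.rpow_one]]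
    have h1 : t ^ (a - 1) ≠ 0 := (Real.rpow_pos_of_pos ht' _).ne'
    have h2 : x ^ (a - 1) ≠ 0 := (Real.rpow_pos_of_pos hx _).ne'
    field_simp
  · rw [Set.indicator_of_notMem ht, Set.indicator_of_notMem ht]

/-! ### The common limiting density (a beta-prime distribution) -/

/-- Density of the ratio distribution: beta-prime with parameters `(1-α, a)`. -/
noncomputable def nud (α a : ℝ) : ℝ → ℝ≥0∞ :=
  (Ioi 0).indicator fun t =>
    ENNReal.ofReal (t ^ (-α) * (1 + t) ^ (-(a + 1 - α)) * Real.Gamma (a + 1 - α) /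
      (Real.Gamma a * Real.Gamma (1 - α)))


/-- The Euler substitution identity. -/
lemma euler_identity {p q t u : ℝ} (ht : 0 < t) (hu : 0 < u) (hu1 : u < 1) :
    t * (1 + t) / (1 + t - u) ^ 2 * ((u * t / (1 + t - u)) ^ (p - 1)
        * (((1 + t) * (1 - u) / (1 + t - u)) ^ (q - 1)
          * (t * (1 + t) / (1 + t - u)) ^ (-(p + q))))
      = t ^ (-q) * (1 + t) ^ (-p) * (u ^ (p - 1) * (1 - u) ^ (q - 1)) := by
  have h1 : (0:ℝ) < 1 + t - u := by linarith
  have hS : (0:ℝ) < 1 + t := by linarith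
  have hB : (0:ℝ) < 1 - u := by linarith
  have hW : (0:ℝ) < t * (1 + t) / (1 + t - u) ^ 2 := by positivity
  have hX : (0:ℝ) < (u * t / (1 + t - u)) ^ (p - 1) := Real.rpow_pos_of_pos (by positivity) _
  have hY : (0:ℝ) < ((1 + t) * (1 - u) / (1 + t - u)) ^ (q - 1) :=
    Real.rpow_pos_of_pos (by positivity) _
  have hZ : (0:ℝ) < (t * (1 + t) / (1 + t - u)) ^ (-(p + q)) :=
    Real.rpow_pos_of_pos (by positivity) _
  have hL : (0:ℝ) < t * (1 + t) / (1 + t - u) ^ 2 * ((u * t / (1 + t - u)) ^ (p - 1)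
      * (((1 + t) * (1 - u) / (1 + t - u)) ^ (q - 1)
        * (t * (1 + t) / (1 + t - u)) ^ (-(p + q)))) := by positivity
  have hR : (0:ℝ) < t ^ (-q) * (1 + t) ^ (-p) * (u ^ (p - 1) * (1 - u) ^ (q - 1)) := by
    have := Real.rpow_pos_of_pos ht (-q); have := Real.rpow_pos_of_pos hS (-p)
    have := Real.rpow_pos_of_pos hu (p - 1); have := Real.rpow_pos_of_pos hB (q - 1)
    positivity
  rw [← Real.exp_log hL, ← Real.exp_log hR]
  congr 1
  rw [Real.log_mul hW.ne' (by positivity), Real.log_mul hX.ne' (by positivity),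
    Real.log_mul hY.ne' hZ.ne',
    Real.log_mul (by positivity : (0:ℝ) < t ^ (-q) * (1 + t) ^ (-p)).ne' (by positivity),
    Real.log_mul (Real.rpow_pos_of_pos ht (-q)).ne' (Real.rpow_pos_of_pos hS (-p)).ne',
    Real.log_mul (Real.rpow_pos_of_pos hu (p - 1)).ne' (Real.rpow_pos_of_pos hB (q - 1)).ne']
  have a1 : Real.log (t * (1 + t) / (1 + t - u) ^ 2)
      = Real.log t + Real.log (1 + t) - 2 * Real.log (1 + t - u) := by
    rw [Real.log_div (by positivity) (by positivity), Real.log_mul ht.ne' hS.ne', Real.log_pow]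
    push_cast; ring
  have a2 : Real.log ((u * t / (1 + t - u)) ^ (p - 1))
      = (p - 1) * (Real.log u + Real.log t - Real.log (1 + t - u)) := by
    rw [Real.log_rpow (by positivity), Real.log_div (by positivity) h1.ne',
      Real.log_mul hu.ne' ht.ne']
  have a3 : Real.log (((1 + t) * (1 - u) / (1 + t - u)) ^ (q - 1))
      = (q - 1) * (Real.log (1 + t) + Real.log (1 - u) - Real.log (1 + t - u)) := by
    rw [Real.log_rpow (by positivity), Real.log_div (by positivity) h1.ne',
      Real.log_mul hS.ne' hB.ne']
  have a4 : Real.log ((t * (1 + t) / (1 + t - u)) ^ (-(p + q)))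
      = (-(p + q)) * (Real.log t + Real.log (1 + t) - Real.log (1 + t - u)) := by
    rw [Real.log_rpow (by positivity), Real.log_div (by positivity) h1.ne',
      Real.log_mul ht.ne' hS.ne']
  rw [a1, a2, a3, a4, Real.log_rpow ht, Real.log_rpow hS, Real.log_rpow hu, Real.log_rpow hB]
  ring

/-- The key substitution integral (Euler's substitution `x = u t/(1+t-u)`). -/
lemma lintegral_G {p q t : ℝ} (hp : 0 < p) (hq : 0 < q) (ht : 0 < t) :
    ∫⁻ x in Ioo (0:ℝ) 1, ENNReal.ofReal (x ^ (p - 1) * ((1 - x) ^ (q - 1)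
        * (x + t) ^ (-(p + q))))
      = ENNReal.ofReal (t ^ (-q) * (1 + t) ^ (-p))
          * ENNReal.ofReal (Real.Gamma p * Real.Gamma q / Real.Gamma (p + q)) := by
  have him : (fun u : ℝ => u * t / (1 + t - u)) '' Ioo 0 1 = Ioo 0 1 := by
    ext x
    constructor
    · rintro ⟨u, ⟨hu0, hu1⟩, rfl⟩
      have hd : (0:ℝ) < 1 + t - u := by linarith
      constructor
      · positivity
      · rw [div_lt_one hd]
        nlinarith
    · rintro ⟨hx0, hx1⟩
      refine ⟨x * (1 + t) / (x + t), ⟨by positivity, ?_⟩, ?_⟩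
      · rw [div_lt_one (by positivity)]
        nlinarith
      · have hxt : (0:ℝ) < x + t := by positivity
        have hd : 1 + t - x * (1 + t) / (x + t) = (1 + t) * t / (x + t) := by
          field_simp; ring
        show x * (1 + t) / (x + t) * t / (1 + t - x * (1 + t) / (x + t)) = x
        rw [hd, div_div_eq_mul_div]
        field_simp
  have hderiv : ∀ u ∈ Ioo (0:ℝ) 1, HasDerivWithinAt (fun u : ℝ => u * t / (1 + t - u))
      (t * (1 + t) / (1 + t - u) ^ 2) (Ioo 0 1) u := by
    intro u hu
    have hd : (0:ℝ) < 1 + t - u := by have := hu.2; linarith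
    have h1 : HasDerivAt (fun u : ℝ => u * t) t u := by
      simpa using (hasDerivAt_id u).mul_const t
    have h2 : HasDerivAt (fun u : ℝ => 1 + t - u) (-1) u := by
      simpa using ((hasDerivAt_id u).const_sub (1 + t))
    have := h1.div h2 hd.ne'
    have heq : (t * (1 + t - u) - u * t * -1) / (1 + t - u) ^ 2
        = t * (1 + t) / (1 + t - u) ^ 2 := by ring
    rw [heq] at this
    exact this.hasDerivWithinAt
  have hinj : InjOn (fun u : ℝ => u * t / (1 + t - u)) (Ioo 0 1) := by
    intro u1 h1 u2 h2 h
    simp only at h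
    have hd1 : (0:ℝ) < 1 + t - u1 := by have := h1.2; linarith
    have hd2 : (0:ℝ) < 1 + t - u2 := by have := h2.2; linarith
    rw [div_eq_div_iff hd1.ne' hd2.ne'] at h
    have key : t * (1 + t) * u1 = t * (1 + t) * u2 := by linear_combination h
    exact mul_left_cancel₀ (by positivity) key
  rw [← him, lintegral_image_deriv measurableSet_Ioo hderiv hinj]
  have point : ∀ u ∈ Ioo (0:ℝ) 1,
      ENNReal.ofReal |t * (1 + t) / (1 + t - u) ^ 2|
        * ENNReal.ofReal ((u * t / (1 + t - u)) ^ (p - 1)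
          * ((1 - u * t / (1 + t - u)) ^ (q - 1)
            * (u * t / (1 + t - u) + t) ^ (-(p + q))))
      = ENNReal.ofReal (t ^ (-q) * (1 + t) ^ (-p))
          * ENNReal.ofReal (u ^ (p - 1) * (1 - u) ^ (q - 1)) := by
    intro u hu
    have hu0 : (0:ℝ) < u := hu.1
    have hu1 : u < 1 := hu.2
    have hd : (0:ℝ) < 1 + t - u := by linarith
    have e1 : 1 - u * t / (1 + t - u) = (1 + t) * (1 - u) / (1 + t - u) := by
      field_simp; ring
    have e2 : u * t / (1 + t - u) + t = t * (1 + t) / (1 + t - u) := by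
      field_simp; ring
    rw [e1, e2, abs_of_pos (show (0:ℝ) < t * (1 + t) / (1 + t - u) ^ 2 by positivity),
      ← ENNReal.ofReal_mul (by positivity), ← ENNReal.ofReal_mul
        (by positivity : (0:ℝ) ≤ t ^ (-q) * (1 + t) ^ (-p))]
    exact congrArg ENNReal.ofReal (euler_identity ht hu0 hu1)
  rw [setLIntegral_congr_fun measurableSet_Ioo point,
    lintegral_const_mul' _ _ ENNReal.ofReal_ne_top, lintegral_betaInt hp hq]

/-! ### The laws of the two ratio statistics -/

lemma hhA {α a : ℝ} (hα0 : 0 < α) (hα1 : α < 1) (ha : 0 < a) (t : ℝ) :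
    (∫⁻ x, (Ioo (0:ℝ) 1).indicator (fun x =>
        ENNReal.ofReal (x ^ (1 - α - 1) * (1 - x) ^ (α - 1) * Real.Gamma (1 - α + α) /
          (Real.Gamma (1 - α) * Real.Gamma α))) x
      * (Ioi (0:ℝ)).indicator (fun s =>
          ENNReal.ofReal (a * x ^ a * (x + s) ^ (-(a + 1)))) t)
      = nud α a t := by
  have hΓa : (0:ℝ) < Real.Gamma a := Real.Gamma_pos_of_pos ha
  have hΓb : (0:ℝ) < Real.Gamma (1 - α) := Real.Gamma_pos_of_pos (by linarith)
  have hΓα : (0:ℝ) < Real.Gamma α := Real.Gamma_pos_of_pos hα0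
  by_cases ht : t ∈ Ioi (0:ℝ)
  · have ht' : (0:ℝ) < t := ht
    have hp : (0:ℝ) < a + 1 - α := by linarith
    have stepA : ∀ x, (Ioo (0:ℝ) 1).indicator (fun x =>
        ENNReal.ofReal (x ^ (1 - α - 1) * (1 - x) ^ (α - 1) * Real.Gamma (1 - α + α) /
          (Real.Gamma (1 - α) * Real.Gamma α))) x
        * (Ioi (0:ℝ)).indicator (fun s =>
            ENNReal.ofReal (a * x ^ a * (x + s) ^ (-(a + 1)))) t
        = (Ioo (0:ℝ) 1).indicator (fun x =>
            ENNReal.ofReal (a / (Real.Gamma (1 - α) * Real.Gamma α))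
              * ENNReal.ofReal (x ^ (a + 1 - α - 1) * ((1 - x) ^ (α - 1)
                * (x + t) ^ (-(a + 1 - α + α))))) x := by
      intro x
      by_cases hx : x ∈ Ioo (0:ℝ) 1
      · have hx0 : (0:ℝ) < x := hx.1
        have hx1 : (0:ℝ) < 1 - x := by have := hx.2; linarith
        have hΓ1 : (0:ℝ) < Real.Gamma (1 - α + α) :=
          Real.Gamma_pos_of_pos (by linarith : (0:ℝ) < 1 - α + α)
        have hd1nn : (0:ℝ) ≤ x ^ (1 - α - 1) * (1 - x) ^ (α - 1) * Real.Gamma (1 - α + α) /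
            (Real.Gamma (1 - α) * Real.Gamma α) :=
          div_nonneg (mul_nonneg (mul_nonneg (Real.rpow_nonneg hx0.le _)
            (Real.rpow_nonneg hx1.le _)) hΓ1.le) (mul_pos hΓb hΓα).le
        have hKnn : (0:ℝ) ≤ a / (Real.Gamma (1 - α) * Real.Gamma α) :=
          (div_pos ha (mul_pos hΓb hΓα)).le
        rw [Set.indicator_of_mem hx, Set.indicator_of_mem hx, Set.indicator_of_mem ht,
          ← ENNReal.ofReal_mul hd1nn, ← ENNReal.ofReal_mul hKnn]
        congr 1
        have hxx : x ^ (1 - α - 1) * x ^ a = x ^ (a + 1 - α - 1) := by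
          rw [← Real.rpow_add hx0]; congr 1; ring
        rw [show (1:ℝ) - α + α = 1 by ring, Real.Gamma_one,
          show -(a + 1 - α + α) = -(a + 1) by ring, ← hxx]
        field_simp
      · rw [Set.indicator_of_notMem hx, Set.indicator_of_notMem hx, zero_mul]
    rw [lintegral_congr stepA, lintegral_indicator measurableSet_Ioo,
      lintegral_const_mul' _ _ ENNReal.ofReal_ne_top, lintegral_G hp hα0 ht',
      nud, Set.indicator_of_mem ht]
    have hKnn : (0:ℝ) ≤ a / (Real.Gamma (1 - α) * Real.Gamma α) :=
      (div_pos ha (mul_pos hΓb hΓα)).le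
    have hTnn : (0:ℝ) ≤ t ^ (-α) * (1 + t) ^ (-(a + 1 - α)) := by positivity
    rw [← mul_assoc, ← ENNReal.ofReal_mul hKnn, ← ENNReal.ofReal_mul (mul_nonneg hKnn hTnn)]
    congr 1
    rw [show a + 1 - α + α = a + 1 by ring, Real.Gamma_add_one ha.ne']
    field_simp
    try ring
  · simp only [Set.indicator_of_notMem ht, mul_zero, lintegral_zero, nud]

lemma mapA {α a : ℝ} (hα0 : 0 < α) (hα1 : α < 1) (ha : 0 < a) :
    Measure.map (fun p : ℝ × ℝ => p.1 * (1 - p.2) / p.2) ((betaM (1 - α) α).prod (betaM a 1))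
      = volume.withDensity (nud α a) := by
  haveI : SFinite (betaM a 1) := by unfold betaM; infer_instance
  have hb : betaM (1 - α) α = volume.withDensity ((Ioo (0:ℝ) 1).indicator fun t =>
      ENNReal.ofReal (t ^ (1 - α - 1) * (1 - t) ^ (α - 1) * Real.Gamma (1 - α + α) /
        (Real.Gamma (1 - α) * Real.Gamma α))) := rfl
  rw [hb]
  have hgm : Measurable (Function.uncurry fun x s => (Ioi (0:ℝ)).indicator (fun s =>
      ENNReal.ofReal (a * x ^ a * (x + s) ^ (-(a + 1)))) s) := by
    have heq : (Function.uncurry fun x s => (Ioi (0:ℝ)).indicator (fun s =>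
        ENNReal.ofReal (a * x ^ a * (x + s) ^ (-(a + 1)))) s)
        = Set.indicator ((univ : Set ℝ) ×ˢ Ioi (0:ℝ)) (fun p : ℝ × ℝ =>
            ENNReal.ofReal (a * p.1 ^ a * (p.1 + p.2) ^ (-(a + 1)))) := by
      funext p
      by_cases hp : p.2 ∈ Ioi (0:ℝ) <;>
        simp [Function.uncurry, Set.indicator, hp]
    rw [heq]
    exact Measurable.indicator (by fun_prop) (MeasurableSet.univ.prod measurableSet_Ioi)
  exact map_prod_wd (f := fun x r => x * (1 - r) / r) (by fun_prop)
    (by fun_prop) measurableSet_Ioo (fun x => ENNReal.ofReal_ne_top)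
    hgm (fun x hx => mapInnerA ha hx.1) (hhA hα0 hα1 ha)

lemma hhB {α a : ℝ} (hα0 : 0 < α) (hα1 : α < 1) (ha : 0 < a) (t : ℝ) :
    (∫⁻ x, (Ioi (0:ℝ)).indicator (fun x =>
        ENNReal.ofReal (x ^ (1 - α - 1) * Real.exp (-x) / Real.Gamma (1 - α))) x
      * (Ioi (0:ℝ)).indicator (fun s =>
          ENNReal.ofReal (x ^ a * s ^ (-(a + 1)) * Real.exp (-(x / s)) / Real.Gamma a)) t)
      = nud α a t := by
  have hΓa : (0:ℝ) < Real.Gamma a := Real.Gamma_pos_of_pos ha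
  have hΓb : (0:ℝ) < Real.Gamma (1 - α) := Real.Gamma_pos_of_pos (by linarith)
  by_cases ht : t ∈ Ioi (0:ℝ)
  · have ht' : (0:ℝ) < t := ht
    have hp : (0:ℝ) < a + 1 - α := by linarith
    have hc : (0:ℝ) < 1 + 1 / t := by positivity
    have stepA : ∀ x, (Ioi (0:ℝ)).indicator (fun x =>
        ENNReal.ofReal (x ^ (1 - α - 1) * Real.exp (-x) / Real.Gamma (1 - α))) x
        * (Ioi (0:ℝ)).indicator (fun s =>
            ENNReal.ofReal (x ^ a * s ^ (-(a + 1)) * Real.exp (-(x / s)) / Real.Gamma a)) t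
        = (Ioi (0:ℝ)).indicator (fun x =>
            ENNReal.ofReal (t ^ (-(a + 1)) / (Real.Gamma (1 - α) * Real.Gamma a))
              * ENNReal.ofReal (x ^ (a + 1 - α - 1)
                * Real.exp (-((1 + 1 / t) * x)))) x := by
      intro x
      by_cases hx : x ∈ Ioi (0:ℝ)
      · have hx0 : (0:ℝ) < x := hx
        have hd1nn : (0:ℝ) ≤ x ^ (1 - α - 1) * Real.exp (-x) / Real.Gamma (1 - α) :=
          div_nonneg (mul_nonneg (Real.rpow_nonneg hx0.le _) (Real.exp_pos _).le) hΓb.le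
        have hKnn : (0:ℝ) ≤ t ^ (-(a + 1)) / (Real.Gamma (1 - α) * Real.Gamma a) :=
          div_nonneg (Real.rpow_nonneg ht'.le _) (mul_pos hΓb hΓa).le
        rw [Set.indicator_of_mem hx, Set.indicator_of_mem hx, Set.indicator_of_mem ht,
          ← ENNReal.ofReal_mul hd1nn, ← ENNReal.ofReal_mul hKnn]
        congr 1
        have hxx : x ^ (1 - α - 1) * x ^ a = x ^ (a + 1 - α - 1) := by
          rw [← Real.rpow_add hx0]; congr 1; ring
        have he : Real.exp (-x) * Real.exp (-(x / t)) = Real.exp (-((1 + 1 / t) * x)) := by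
          rw [← Real.exp_add]; congr 1; field_simp; ring
        rw [← hxx, ← he]
        have htpos : (0:ℝ) < t ^ (-(a + 1)) := Real.rpow_pos_of_pos ht' _
        field_simp
        try ring
      · rw [Set.indicator_of_notMem hx, Set.indicator_of_notMem hx, zero_mul]
    rw [lintegral_congr stepA, lintegral_indicator measurableSet_Ioi,
      lintegral_const_mul' _ _ ENNReal.ofReal_ne_top, lintegral_gammaC hp hc,
      nud, Set.indicator_of_mem ht]
    have hKnn : (0:ℝ) ≤ t ^ (-(a + 1)) / (Real.Gamma (1 - α) * Real.Gamma a) :=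
      div_nonneg (Real.rpow_nonneg ht'.le _) (mul_pos hΓb hΓa).le
    rw [← ENNReal.ofReal_mul hKnn]
    congr 1
    have e : (1:ℝ) / (1 + 1 / t) = t / (1 + t) := by
      have h2 : (1:ℝ) + 1 / t = (1 + t) / t := by
        rw [add_div, div_self ht'.ne', add_comm, one_div]
      rw [h2, one_div, inv_div]
    have hq : t ^ (-(a + 1)) * (t / (1 + t)) ^ (a + 1 - α)
        = t ^ (-α) * (1 + t) ^ (-(a + 1 - α)) := by
      have hS : (0:ℝ) < 1 + t := by linarith
      have hL : (0:ℝ) < t ^ (-(a + 1)) * (t / (1 + t)) ^ (a + 1 - α) := by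
        have := Real.rpow_pos_of_pos ht' (-(a + 1))
        have := Real.rpow_pos_of_pos (div_pos ht' hS) (a + 1 - α)
        positivity
      have hR : (0:ℝ) < t ^ (-α) * (1 + t) ^ (-(a + 1 - α)) := by
        have := Real.rpow_pos_of_pos ht' (-α)
        have := Real.rpow_pos_of_pos hS (-(a + 1 - α))
        positivity
      rw [← Real.exp_log hL, ← Real.exp_log hR]
      congr 1
      rw [Real.log_mul (Real.rpow_pos_of_pos ht' _).ne'
          (Real.rpow_pos_of_pos (by positivity) _).ne',
        Real.log_mul (Real.rpow_pos_of_pos ht' _).ne' (Real.rpow_pos_of_pos hS _).ne',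
        Real.log_rpow ht', Real.log_rpow (by positivity), Real.log_rpow ht',
        Real.log_rpow hS, Real.log_div ht'.ne' hS.ne']
      ring
    rw [e, ← hq]
    field_simp
    try ring
  · simp only [Set.indicator_of_notMem ht, mul_zero, lintegral_zero, nud]

lemma mapB {α a : ℝ} (hα0 : 0 < α) (hα1 : α < 1) (ha : 0 < a) :
    Measure.map (fun q : ℝ × ℝ => q.1 / q.2) ((gammaM (1 - α)).prod (gammaM a))
      = volume.withDensity (nud α a) := by
  haveI : SFinite (gammaM a) := by unfold gammaM; infer_instance
  have hb : gammaM (1 - α) = volume.withDensity ((Ioi (0:ℝ)).indicator fun t =>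
      ENNReal.ofReal (t ^ (1 - α - 1) * Real.exp (-t) / Real.Gamma (1 - α))) := rfl
  rw [hb]
  have hgm : Measurable (Function.uncurry fun x s => (Ioi (0:ℝ)).indicator (fun s =>
      ENNReal.ofReal (x ^ a * s ^ (-(a + 1)) * Real.exp (-(x / s)) / Real.Gamma a)) s) := by
    have heq : (Function.uncurry fun x s => (Ioi (0:ℝ)).indicator (fun s =>
        ENNReal.ofReal (x ^ a * s ^ (-(a + 1)) * Real.exp (-(x / s)) / Real.Gamma a)) s)
        = Set.indicator ((univ : Set ℝ) ×ˢ Ioi (0:ℝ)) (fun p : ℝ × ℝ =>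
            ENNReal.ofReal (p.1 ^ a * p.2 ^ (-(a + 1)) * Real.exp (-(p.1 / p.2))
              / Real.Gamma a)) := by
      funext p
      by_cases hp : p.2 ∈ Ioi (0:ℝ) <;>
        simp [Function.uncurry, Set.indicator, hp]
    rw [heq]
    exact Measurable.indicator (by fun_prop) (MeasurableSet.univ.prod measurableSet_Ioi)
  exact map_prod_wd (f := fun x r => x / r) (by fun_prop)
    (by fun_prop) measurableSet_Ioi (fun x => ENNReal.ofReal_ne_top)
    hgm (fun x hx => mapInnerB ha hx) (hhB hα0 hα1 ha)

/-! ### Mapping the ratio distribution back to Beta distributions -/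

lemma mapC {α a : ℝ} (hα0 : 0 < α) (hα1 : α < 1) (ha : 0 < a) :
    Measure.map (fun t : ℝ => (t + 1)⁻¹) (volume.withDensity (nud α a))
      = betaM a (1 - α) := by
  have hΓa : (0:ℝ) < Real.Gamma a := Real.Gamma_pos_of_pos ha
  have hΓb : (0:ℝ) < Real.Gamma (1 - α) := Real.Gamma_pos_of_pos (by linarith)
  have key := map_wd (I := Ioi 0) (J := Ioo 0 1)
    (T := fun t => (t + 1)⁻¹) (σ := fun w => w⁻¹ - 1) (σ' := fun w => -(w ^ 2)⁻¹)
    measurableSet_Ioi measurableSet_Ioo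
    (by fun_prop)
    (fun w hw => ((hasDerivAt_inv hw.1.ne').sub_const 1).hasDerivWithinAt)
    (fun w1 h1 w2 h2 h => by
      simp only at h
      have h' : w1⁻¹ = w2⁻¹ := by linarith
      exact inv_injective h')
    (fun w hw => by
      have h0 : (0:ℝ) < w := hw.1
      have h1 : w < 1 := hw.2
      have e : w⁻¹ - 1 = (1 - w) / w := by field_simp
      have h2 : (0:ℝ) < 1 - w := by linarith
      have hpos : (0:ℝ) < w⁻¹ - 1 := by rw [e]; positivity
      exact hpos)
    (fun t ht => by
      have ht' : (0:ℝ) < t := ht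
      constructor
      · positivity
      · rw [inv_lt_one_iff₀]
        right; linarith)
    (fun w hw => by
      have h0 : (0:ℝ) < w := hw.1
      simp)
    (fun t ht => by
      have ht' : (0:ℝ) < t := ht
      have : t + 1 ≠ 0 := by positivity
      simp [inv_inv])
    (fun t => ENNReal.ofReal (t ^ (-α) * (1 + t) ^ (-(a + 1 - α)) * Real.Gamma (a + 1 - α) /
      (Real.Gamma a * Real.Gamma (1 - α))))
  rw [show volume.withDensity (nud α a) = volume.withDensity ((Ioi (0:ℝ)).indicator fun t =>
    ENNReal.ofReal (t ^ (-α) * (1 + t) ^ (-(a + 1 - α)) * Real.Gamma (a + 1 - α) /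
      (Real.Gamma a * Real.Gamma (1 - α)))) from rfl, key]
  show _ = volume.withDensity ((Ioo (0:ℝ) 1).indicator fun w =>
    ENNReal.ofReal (w ^ (a - 1) * (1 - w) ^ (1 - α - 1) * Real.Gamma (a + (1 - α)) /
      (Real.Gamma a * Real.Gamma (1 - α))))
  congr 1
  funext w
  by_cases hw : w ∈ Ioo (0:ℝ) 1
  · rw [Set.indicator_of_mem hw, Set.indicator_of_mem hw]
    have h0 : (0:ℝ) < w := hw.1
    have h1 : (0:ℝ) < 1 - w := by have := hw.2; linarith
    rw [← ENNReal.ofReal_mul (by positivity)]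
    congr 1
    have e1 : w⁻¹ - 1 = (1 - w) / w := by field_simp
    have e2 : 1 + (w⁻¹ - 1) = w⁻¹ := by ring
    rw [e2, e1, abs_neg, abs_of_pos (show (0:ℝ) < ((w:ℝ) ^ 2)⁻¹ by positivity)]
    have hq : ((w:ℝ) ^ 2)⁻¹ * (((1 - w) / w) ^ (-α) * (w⁻¹) ^ (-(a + 1 - α)))
        = w ^ (a - 1) * (1 - w) ^ (1 - α - 1) := by
      have hP1 : (0:ℝ) < ((1 - w) / w) ^ (-α) := Real.rpow_pos_of_pos (by positivity) _
      have hP2 : (0:ℝ) < (w⁻¹ : ℝ) ^ (-(a + 1 - α)) := Real.rpow_pos_of_pos (by positivity) _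
      have hL : (0:ℝ) < ((w:ℝ) ^ 2)⁻¹ * (((1 - w) / w) ^ (-α) * (w⁻¹) ^ (-(a + 1 - α))) := by
        positivity
      have hR : (0:ℝ) < w ^ (a - 1) * (1 - w) ^ (1 - α - 1) := by
        have := Real.rpow_pos_of_pos h0 (a - 1)
        have := Real.rpow_pos_of_pos h1 (1 - α - 1)
        positivity
      rw [← Real.exp_log hL, ← Real.exp_log hR]
      congr 1
      rw [Real.log_mul (by positivity) (by positivity), Real.log_mul hP1.ne' hP2.ne',
        Real.log_mul (Real.rpow_pos_of_pos h0 (a - 1)).ne'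
          (Real.rpow_pos_of_pos h1 (1 - α - 1)).ne',
        Real.log_inv, Real.log_pow, Real.log_rpow (by positivity),
        Real.log_rpow (by positivity), Real.log_div h1.ne' h0.ne', Real.log_inv,
        Real.log_rpow h0, Real.log_rpow h1]
      push_cast
      ring
    calc ((w:ℝ) ^ 2)⁻¹ * (((1 - w) / w) ^ (-α) * (w⁻¹) ^ (-(a + 1 - α))
          * Real.Gamma (a + 1 - α) / (Real.Gamma a * Real.Gamma (1 - α)))
        = (((w:ℝ) ^ 2)⁻¹ * (((1 - w) / w) ^ (-α) * (w⁻¹) ^ (-(a + 1 - α))))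
          * (Real.Gamma (a + 1 - α) / (Real.Gamma a * Real.Gamma (1 - α))) := by ring
      _ = (w ^ (a - 1) * (1 - w) ^ (1 - α - 1))
          * (Real.Gamma (a + 1 - α) / (Real.Gamma a * Real.Gamma (1 - α))) := by rw [hq]
      _ = w ^ (a - 1) * (1 - w) ^ (1 - α - 1) * Real.Gamma (a + (1 - α)) /
          (Real.Gamma a * Real.Gamma (1 - α)) := by rw [show a + (1 - α) = a + 1 - α by ring]; ring
  · rw [Set.indicator_of_notMem hw, Set.indicator_of_notMem hw]


lemma mapD {α a : ℝ} (hα0 : 0 < α) (hα1 : α < 1) (ha : 0 < a) :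
    Measure.map (fun t : ℝ => 1 - (t + 1)⁻¹) (volume.withDensity (nud α a))
      = betaM (1 - α) a := by
  have hΓa : (0:ℝ) < Real.Gamma a := Real.Gamma_pos_of_pos ha
  have hΓb : (0:ℝ) < Real.Gamma (1 - α) := Real.Gamma_pos_of_pos (by linarith)
  have key := map_wd (I := Ioi 0) (J := Ioo 0 1)
    (T := fun t => 1 - (t + 1)⁻¹) (σ := fun w => (1 - w)⁻¹ - 1)
    (σ' := fun w => ((1 - w) ^ 2)⁻¹)
    measurableSet_Ioi measurableSet_Ioo
    (by fun_prop)
    (fun w hw => by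
      have h1 : (0:ℝ) < 1 - w := by have := hw.2; linarith
      have hc : HasDerivAt (fun w : ℝ => 1 - w) (-1) w := by
        simpa using (hasDerivAt_id w).const_sub 1
      have := (hc.inv h1.ne').sub_const 1
      have heq : (-(-1) / (1 - w) ^ 2 : ℝ) = ((1 - w) ^ 2)⁻¹ := by ring
      rw [heq] at this
      exact this.hasDerivWithinAt)
    (fun w1 h1 w2 h2 h => by
      simp only at h
      have h' : (1 - w1)⁻¹ = (1 - w2)⁻¹ := by linarith
      have := inv_injective h'
      linarith)
    (fun w hw => by
      have h0 : (0:ℝ) < w := hw.1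
      have h1 : (0:ℝ) < 1 - w := by have := hw.2; linarith
      have e : (1 - w)⁻¹ - 1 = w / (1 - w) := by field_simp; ring
      have hpos : (0:ℝ) < (1 - w)⁻¹ - 1 := by rw [e]; positivity
      exact hpos)
    (fun t ht => by
      have ht' : (0:ℝ) < t := ht
      have hinv : (0:ℝ) < (t + 1)⁻¹ := by positivity
      have hlt : (t + 1)⁻¹ < 1 := by rw [inv_lt_one_iff₀]; right; linarith
      constructor
      · linarith
      · linarith)
    (fun w hw => by
      have h1 : (1 - w)⁻¹ - 1 + 1 = (1 - w)⁻¹ := by ring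
      simp only [h1, inv_inv]
      ring)
    (fun t ht => by
      have h1 : 1 - (1 - (t + 1)⁻¹) = (t + 1)⁻¹ := by ring
      simp only [h1, inv_inv]
      ring)
    (fun t => ENNReal.ofReal (t ^ (-α) * (1 + t) ^ (-(a + 1 - α)) * Real.Gamma (a + 1 - α) /
      (Real.Gamma a * Real.Gamma (1 - α))))
  rw [show volume.withDensity (nud α a) = volume.withDensity ((Ioi (0:ℝ)).indicator fun t =>
    ENNReal.ofReal (t ^ (-α) * (1 + t) ^ (-(a + 1 - α)) * Real.Gamma (a + 1 - α) /
      (Real.Gamma a * Real.Gamma (1 - α)))) from rfl, key]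
  show _ = volume.withDensity ((Ioo (0:ℝ) 1).indicator fun w =>
    ENNReal.ofReal (w ^ (1 - α - 1) * (1 - w) ^ (a - 1) * Real.Gamma (1 - α + a) /
      (Real.Gamma (1 - α) * Real.Gamma a)))
  congr 1
  funext w
  by_cases hw : w ∈ Ioo (0:ℝ) 1
  · rw [Set.indicator_of_mem hw, Set.indicator_of_mem hw]
    have h0 : (0:ℝ) < w := hw.1
    have h1 : (0:ℝ) < 1 - w := by have := hw.2; linarith
    rw [← ENNReal.ofReal_mul (by positivity)]
    congr 1
    have e1 : (1 - w)⁻¹ - 1 = w / (1 - w) := by field_simp; ring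
    have e2 : 1 + ((1 - w)⁻¹ - 1) = (1 - w)⁻¹ := by ring
    rw [e2, e1, abs_of_pos (show (0:ℝ) < (((1 - w):ℝ) ^ 2)⁻¹ by positivity)]
    have hq : (((1 - w):ℝ) ^ 2)⁻¹ * ((w / (1 - w)) ^ (-α) * ((1 - w)⁻¹) ^ (-(a + 1 - α)))
        = w ^ (1 - α - 1) * (1 - w) ^ (a - 1) := by
      have hP1 : (0:ℝ) < (w / (1 - w)) ^ (-α) := Real.rpow_pos_of_pos (by positivity) _
      have hP2 : (0:ℝ) < ((1 - w)⁻¹ : ℝ) ^ (-(a + 1 - α)) :=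
        Real.rpow_pos_of_pos (by positivity) _
      have hL : (0:ℝ) < (((1 - w):ℝ) ^ 2)⁻¹
          * ((w / (1 - w)) ^ (-α) * ((1 - w)⁻¹) ^ (-(a + 1 - α))) := by positivity
      have hR : (0:ℝ) < w ^ (1 - α - 1) * (1 - w) ^ (a - 1) := by
        have := Real.rpow_pos_of_pos h0 (1 - α - 1)
        have := Real.rpow_pos_of_pos h1 (a - 1)
        positivity
      rw [← Real.exp_log hL, ← Real.exp_log hR]
      congr 1
      rw [Real.log_mul (by positivity) (by positivity), Real.log_mul hP1.ne' hP2.ne',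
        Real.log_mul (Real.rpow_pos_of_pos h0 (1 - α - 1)).ne'
          (Real.rpow_pos_of_pos h1 (a - 1)).ne',
        Real.log_inv, Real.log_pow, Real.log_rpow (by positivity),
        Real.log_rpow (by positivity), Real.log_div h0.ne' h1.ne', Real.log_inv,
        Real.log_rpow h0, Real.log_rpow h1]
      push_cast
      ring
    calc ((((1 - w):ℝ)) ^ 2)⁻¹ * ((w / (1 - w)) ^ (-α) * ((1 - w)⁻¹) ^ (-(a + 1 - α))
          * Real.Gamma (a + 1 - α) / (Real.Gamma a * Real.Gamma (1 - α)))
        = ((((1 - w):ℝ) ^ 2)⁻¹ * ((w / (1 - w)) ^ (-α) * ((1 - w)⁻¹) ^ (-(a + 1 - α))))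
          * (Real.Gamma (a + 1 - α) / (Real.Gamma a * Real.Gamma (1 - α))) := by ring
      _ = (w ^ (1 - α - 1) * (1 - w) ^ (a - 1))
          * (Real.Gamma (a + 1 - α) / (Real.Gamma a * Real.Gamma (1 - α))) := by rw [hq]
      _ = w ^ (1 - α - 1) * (1 - w) ^ (a - 1) * Real.Gamma (1 - α + a) /
          (Real.Gamma (1 - α) * Real.Gamma a) := by
            rw [show (1 - α) + a = a + 1 - α by ring]; ring
  · rw [Set.indicator_of_notMem hw, Set.indicator_of_notMem hw]

/-- **Corollary (Section 4, recovering GEM(α,θ)).** For independent `β ~ Beta(1-α,α)`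
and `R ~ Beta(a,1)`: `β(1-R)/R =_d γ_{1-α}/γ_a` (a ratio of independent Gamma
variables); consequently `W = (β(1-R)/R + 1)⁻¹ ~ Beta(a, 1-α)`, i.e.
`1 - W ~ Beta(1-α, a)`. -/
theorem stmt18 (α a : ℝ) (hα : α ∈ Set.Ioo (0 : ℝ) 1) (ha : 0 < a) :
    (Measure.map (fun p : ℝ × ℝ => p.1 * (1 - p.2) / p.2)
        ((betaM (1 - α) α).prod (betaM a 1))
      = Measure.map (fun q : ℝ × ℝ => q.1 / q.2) ((gammaM (1 - α)).prod (gammaM a))) ∧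
    (Measure.map (fun p : ℝ × ℝ => (p.1 * (1 - p.2) / p.2 + 1)⁻¹)
        ((betaM (1 - α) α).prod (betaM a 1))
      = betaM a (1 - α)) ∧
    (Measure.map (fun p : ℝ × ℝ => 1 - (p.1 * (1 - p.2) / p.2 + 1)⁻¹)
        ((betaM (1 - α) α).prod (betaM a 1))
      = betaM (1 - α) a) := by
  obtain ⟨hα0, hα1⟩ := hα
  have hF : Measurable fun p : ℝ × ℝ => p.1 * (1 - p.2) / p.2 := by fun_prop
  have hg1 : Measurable fun t : ℝ => (t + 1)⁻¹ := by fun_prop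
  have hg2 : Measurable fun t : ℝ => 1 - (t + 1)⁻¹ := by fun_prop
  have key1 := mapA hα0 hα1 ha
  refine ⟨key1.trans (mapB hα0 hα1 ha).symm, ?_, ?_⟩
  · have comp : (fun p : ℝ × ℝ => (p.1 * (1 - p.2) / p.2 + 1)⁻¹)
        = (fun t : ℝ => (t + 1)⁻¹) ∘ (fun p : ℝ × ℝ => p.1 * (1 - p.2) / p.2) := rfl
    rw [comp, ← Measure.map_map hg1 hF, key1, mapC hα0 hα1 ha]
  · have comp : (fun p : ℝ × ℝ => 1 - (p.1 * (1 - p.2) / p.2 + 1)⁻¹)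
        = (fun t : ℝ => 1 - (t + 1)⁻¹) ∘ (fun p : ℝ × ℝ => p.1 * (1 - p.2) / p.2) := rfl
    rw [comp, ← Measure.map_map hg2 hF, key1, mapD hα0 hα1 ha]
end
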